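/- arXiv:2105.05842 — 9 statements merged into one kernel-verified Lean document; each statement's English description precedes it below -/
import Mathlib

section
/- Let d ≥ 1 and let k_rt : ℝᵈ × ℝᵈ → ℝ be measurable with sup_x ∫_{ℝᵈ} k_rt(x,z)² dz < ∞, and define k(x,y) := ∫_{ℝᵈ} k_rt(x,z) k_rt(y,z) dz with ‖k‖_∞ := sup_{x,y} |k(x,y)| < ∞. Let P and Q be Borel probability measures on ℝᵈ such that x ↦ k_rt(x,z) is P-integrable and Q-integrable for every z, and let R ≥ 0 and a, b ≥ 0 with a + b = 1. Then (∫_{ℝᵈ} (Pk_rt(z) − Qk_rt(z))² dz)^{1/2} ≤ v_d · R^{d/2} · sup_{z∈ℝᵈ} |Pk_rt(z) − Qk_rt(z)| + 2 τ_{k_rt}(aR) + 2 ‖k‖_∞^{1/2} · max(τ_P(bR), τ_Q(bR)), where v_d := (π^{d/2}/Γ(d/2+1))^{1/2}. -/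
open MeasureTheory
open ENNReal

open MeasureTheory ENNReal

section Helpers

variable {α : Type*} [MeasurableSpace α]

/-- `eLpNorm` at `p = 2` as a lintegral of `ofReal` of the square. -/
lemma aux_eLpNorm_sq (f : α → ℝ) (μ : Measure α) :
    eLpNorm f 2 μ = (∫⁻ a, ENNReal.ofReal (f a ^ 2) ∂μ) ^ (1/2 : ℝ) := by
  rw [eLpNorm_eq_lintegral_rpow_enorm_toReal two_ne_zero ENNReal.ofNat_ne_top]
  simp only [ENNReal.toReal_ofNat]
  congr 1
  apply lintegral_congr
  intro a
  rw [← ofReal_norm, ENNReal.rpow_two,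
    ← ENNReal.ofReal_pow (norm_nonneg _), Real.norm_eq_abs, sq_abs]

lemma aux_sqrt_integral_sq (f : α → ℝ) (μ : Measure α) (hf : AEStronglyMeasurable f μ) :
    Real.sqrt (∫ a, f a ^ 2 ∂μ) = (eLpNorm f 2 μ).toReal := by
  have hsm : AEStronglyMeasurable (fun a => f a ^ 2) μ := by
    exact hf.pow 2
  rw [integral_eq_lintegral_of_nonneg_ae (Filter.Eventually.of_forall fun a => sq_nonneg _) hsm,
    aux_eLpNorm_sq, Real.sqrt_eq_rpow, ENNReal.toReal_rpow]

lemma aux_rpow_half_le {x : ℝ≥0∞} {c : ℝ} (hc : 0 ≤ c) (h : x ≤ ENNReal.ofReal (c ^ 2)) :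
    x ^ (1/2 : ℝ) ≤ ENNReal.ofReal c := by
  calc x ^ (1/2:ℝ) ≤ (ENNReal.ofReal (c^2)) ^ (1/2:ℝ) := by gcongr
  _ = ENNReal.ofReal c := by
      rw [ENNReal.ofReal_pow hc, ← ENNReal.rpow_natCast (ENNReal.ofReal c) 2,
        ← ENNReal.rpow_mul]
      norm_num

/-- Cauchy–Schwarz: `(∫ h dμ)² ≤ μ(univ) ⬝ ∫⁻ h²`. -/
lemma aux_cs (μ : Measure α) (h : α → ℝ) (hint : Integrable h μ) :
    ENNReal.ofReal ((∫ a, h a ∂μ) ^ 2)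
      ≤ μ Set.univ * ∫⁻ a, ENNReal.ofReal (h a ^ 2) ∂μ := by
  set X := ∫⁻ a, ENNReal.ofReal (h a ^ 2) ∂μ with hX
  have habs : (∫ a, h a ∂μ) ^ 2 ≤ (∫ a, |h a| ∂μ) ^ 2 := by
    rw [← sq_abs (∫ a, h a ∂μ)]
    have : |∫ a, h a ∂μ| ≤ ∫ a, |h a| ∂μ := by
      simpa [Real.norm_eq_abs] using norm_integral_le_integral_norm (μ := μ) h
    exact pow_le_pow_left₀ (abs_nonneg _) this 2
  have h2 : ENNReal.ofReal (∫ a, |h a| ∂μ) = ∫⁻ a, ENNReal.ofReal |h a| ∂μ :=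
    ofReal_integral_eq_lintegral_ofReal hint.abs
      (Filter.Eventually.of_forall fun a => abs_nonneg _)
  have hmeas : AEMeasurable (fun a => ENNReal.ofReal |h a|) μ :=
    hint.abs.aestronglyMeasurable.aemeasurable.ennreal_ofReal
  have h3 : ∫⁻ a, ENNReal.ofReal |h a| ∂μ ≤ X ^ (1/2:ℝ) * (μ Set.univ) ^ (1/2:ℝ) := by
    have := ENNReal.lintegral_mul_le_Lp_mul_Lq μ
      (by constructor <;> norm_num : Real.HolderConjugate 2 2) hmeas
      (measurable_one.aemeasurable (μ := μ))
    simp only [Pi.mul_apply, Pi.one_apply, mul_one, ENNReal.one_rpow, lintegral_const,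
      one_mul] at this
    refine this.trans_eq ?_
    congr 1
    apply congrArg (· ^ (1/2:ℝ))
    apply lintegral_congr
    intro a
    rw [ENNReal.rpow_two, ← ENNReal.ofReal_pow (abs_nonneg _), sq_abs]
  calc ENNReal.ofReal ((∫ a, h a ∂μ) ^ 2)
      ≤ ENNReal.ofReal ((∫ a, |h a| ∂μ) ^ 2) := ENNReal.ofReal_le_ofReal habs
    _ = (ENNReal.ofReal (∫ a, |h a| ∂μ)) ^ 2 :=
        (ENNReal.ofReal_pow (integral_nonneg fun a => abs_nonneg _) 2)
    _ = (∫⁻ a, ENNReal.ofReal |h a| ∂μ) ^ 2 := by rw [h2]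
    _ ≤ (X ^ (1/2:ℝ) * (μ Set.univ) ^ (1/2:ℝ)) ^ 2 := by gcongr
    _ = X * μ Set.univ := by
        rw [mul_pow, ← ENNReal.rpow_natCast (X ^ (1/2:ℝ)) 2,
          ← ENNReal.rpow_natCast ((μ Set.univ) ^ (1/2:ℝ)) 2, ← ENNReal.rpow_mul,
          ← ENNReal.rpow_mul]
        norm_num
    _ = μ Set.univ * X := mul_comm _ _

end Helpers

/-- Change of variables `y ↦ x - y` over a norm tail set. -/
lemma aux_cov {d : ℕ} (x : EuclideanSpace ℝ (Fin d)) (f : EuclideanSpace ℝ (Fin d) → ℝ)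
    (r : ℝ) :
    ∫ y in {y : EuclideanSpace ℝ (Fin d) | r ≤ ‖y‖}, f (x - y)
      = ∫ z in {z : EuclideanSpace ℝ (Fin d) | r ≤ ‖x - z‖}, f z := by
  have hs : MeasurableSet {y : EuclideanSpace ℝ (Fin d) | r ≤ ‖y‖} :=
    measurableSet_le measurable_const measurable_norm
  have hs2 : MeasurableSet {z : EuclideanSpace ℝ (Fin d) | r ≤ ‖x - z‖} :=
    measurableSet_le measurable_const (measurable_const.sub measurable_id).norm
  rw [← integral_indicator hs, ← integral_indicator hs2,
    ← integral_sub_left_eq_self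
      (Set.indicator {z : EuclideanSpace ℝ (Fin d) | r ≤ ‖x - z‖} f) volume x]
  congr 1
  funext y
  simp [Set.indicator, sub_sub_cancel]

/-- The key bound on a single "piece" of the mean embedding. -/
lemma aux_piece {d : ℕ}
    (krt : EuclideanSpace ℝ (Fin d) → EuclideanSpace ℝ (Fin d) → ℝ)
    (hmeas : Measurable (Function.uncurry krt))
    (hsqint : ∀ x, Integrable (fun z => (krt x z) ^ 2))
    (μ : Measure (EuclideanSpace ℝ (Fin d))) [IsFiniteMeasure μ]
    (hint : ∀ z, Integrable (fun x => krt x z) μ)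
    (u : Set (EuclideanSpace ℝ (Fin d))) (hu : MeasurableSet u)
    (T : Set (EuclideanSpace ℝ (Fin d)))
    (c : ℝ) (hbound : ∀ x ∈ u, (∫ z in T, krt x z ^ 2) ≤ c) :
    ∫⁻ z in T, ENNReal.ofReal ((∫ x in u, krt x z ∂μ) ^ 2)
      ≤ μ u * (ENNReal.ofReal c * μ u) := by
  have hswapmeas : AEMeasurable
      (Function.uncurry fun (z x : EuclideanSpace ℝ (Fin d)) => ENNReal.ofReal (krt x z ^ 2))
      ((volume.restrict T).prod (μ.restrict u)) := by
    apply Measurable.aemeasurable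
    exact ENNReal.measurable_ofReal.comp ((hmeas.comp measurable_swap).pow_const 2)
  calc ∫⁻ z in T, ENNReal.ofReal ((∫ x in u, krt x z ∂μ) ^ 2)
      ≤ ∫⁻ z in T, μ u * ∫⁻ x in u, ENNReal.ofReal (krt x z ^ 2) ∂μ := by
        apply lintegral_mono
        intro z
        have := aux_cs (μ.restrict u) (fun x => krt x z) ((hint z).restrict)
        simpa [Measure.restrict_apply_univ] using this
    _ = μ u * ∫⁻ z in T, ∫⁻ x in u, ENNReal.ofReal (krt x z ^ 2) ∂μ :=
        lintegral_const_mul' _ _ (measure_ne_top μ u)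
    _ = μ u * ∫⁻ x in u, (∫⁻ z in T, ENNReal.ofReal (krt x z ^ 2)) ∂μ := by
        rw [lintegral_lintegral_swap hswapmeas]
    _ ≤ μ u * ∫⁻ _x in u, ENNReal.ofReal c ∂μ := by
        refine mul_le_mul_right ?_ _
        apply lintegral_mono_ae
        refine (ae_restrict_iff' hu).2 (Filter.Eventually.of_forall fun x hx => ?_)
        rw [← ofReal_integral_eq_lintegral_ofReal ((hsqint x).integrableOn)
          (Filter.Eventually.of_forall fun z => sq_nonneg _)]
        exact ENNReal.ofReal_le_ofReal (hbound x hx)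
    _ = μ u * (ENNReal.ofReal c * μ u) := by rw [setLIntegral_const]


/-- The mean embedding of a probability measure `P` under the kernel `h`:
`Ph(z) = ∫ h(x,z) dP(x)`. -/
noncomputable def meanEmbed {d : ℕ}
    (P : Measure (EuclideanSpace ℝ (Fin d)))
    (h : EuclideanSpace ℝ (Fin d) → EuclideanSpace ℝ (Fin d) → ℝ)
    (z : EuclideanSpace ℝ (Fin d)) : ℝ :=
  ∫ x, h x z ∂P

/-- The kernel tail `τ_h(R) = sup_x (∫_{‖y‖ ≥ R} h(x, x−y)² dy)^{1/2}`. -/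
noncomputable def kernelTail {d : ℕ}
    (h : EuclideanSpace ℝ (Fin d) → EuclideanSpace ℝ (Fin d) → ℝ) (R : ℝ) : ℝ :=
  ⨆ x, Real.sqrt (∫ y in {y : EuclideanSpace ℝ (Fin d) | R ≤ ‖y‖}, (h x (x - y)) ^ 2)

/-- The measure tail `τ_P(R) = P({x : ‖x‖ ≥ R})`. -/
noncomputable def measTail {d : ℕ} (P : Measure (EuclideanSpace ℝ (Fin d))) (R : ℝ) : ℝ :=
  (P {x | R ≤ ‖x‖}).toReal

/-- L∞ coresets for `(k_rt, P)` are MMD coresets for `(k, P)`: for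
`k(x,y) = ∫ k_rt(x,z) k_rt(y,z) dz` with `|k| ≤ K∞`, any `R ≥ 0` and `a + b = 1`
with `a, b ≥ 0`, and any uniform bound `S` on `|Pk_rt − Qk_rt|`,
`MMD_k(P,Q) = ‖Pk_rt − Qk_rt‖_{L²} ≤ v_d R^{d/2} S + 2τ_{k_rt}(aR) + 2√K∞ max(τ_P(bR), τ_Q(bR))`,
where `v_d = (π^{d/2}/Γ(d/2+1))^{1/2}`. -/
theorem linf_coreset_to_mmd_coreset {d : ℕ} (hd : 1 ≤ d)
    (krt : EuclideanSpace ℝ (Fin d) → EuclideanSpace ℝ (Fin d) → ℝ)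
    (hmeas : Measurable (Function.uncurry krt))
    (hsqint : ∀ x, Integrable (fun z => (krt x z) ^ 2))
    (Csq : ℝ) (hCsq : ∀ x, (∫ z, (krt x z) ^ 2) ≤ Csq)
    (k : EuclideanSpace ℝ (Fin d) → EuclideanSpace ℝ (Fin d) → ℝ)
    (hk : ∀ x y, k x y = ∫ z, krt x z * krt y z)
    (Kinf : ℝ) (hKinf : ∀ x y, |k x y| ≤ Kinf)
    (P Q : Measure (EuclideanSpace ℝ (Fin d)))
    [IsProbabilityMeasure P] [IsProbabilityMeasure Q]
    (hPint : ∀ z, Integrable (fun x => krt x z) P)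
    (hQint : ∀ z, Integrable (fun x => krt x z) Q)
    (R a b : ℝ) (hR : 0 ≤ R) (ha : 0 ≤ a) (hb : 0 ≤ b) (hab : a + b = 1)
    (S : ℝ) (hS : ∀ z, |meanEmbed P krt z - meanEmbed Q krt z| ≤ S) :
    Real.sqrt (∫ z, (meanEmbed P krt z - meanEmbed Q krt z) ^ 2)
      ≤ Real.sqrt (Real.pi ^ ((d : ℝ) / 2) / Real.Gamma ((d : ℝ) / 2 + 1))
          * R ^ ((d : ℝ) / 2) * S
        + 2 * kernelTail krt (a * R)
        + 2 * Real.sqrt Kinf * max (measTail P (b * R)) (measTail Q (b * R)) := by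
  classical
  haveI : Nonempty (Fin d) := ⟨⟨0, hd⟩⟩
  set g : EuclideanSpace ℝ (Fin d) → ℝ := fun z => meanEmbed P krt z - meanEmbed Q krt z with hgdef
  set T : Set (EuclideanSpace ℝ (Fin d)) := {z : EuclideanSpace ℝ (Fin d) | R ≤ ‖z‖} with hTdef
  set sB : Set (EuclideanSpace ℝ (Fin d)) := {x : EuclideanSpace ℝ (Fin d) | b * R ≤ ‖x‖} with hsBdef
  have hT : MeasurableSet T := measurableSet_le measurable_const measurable_norm
  have hsB : MeasurableSet sB := measurableSet_le measurable_const measurable_norm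
  -- nonnegativity of constants
  have hS0 : 0 ≤ S := (abs_nonneg _).trans (hS 0)
  have hK0 : 0 ≤ Kinf := (abs_nonneg _).trans (hKinf 0 0)
  set τ : ℝ := kernelTail krt (a * R) with hτdef
  set mP : ℝ := measTail P (b * R) with hmPdef
  set mQ : ℝ := measTail Q (b * R) with hmQdef
  set mM : ℝ := max mP mQ with hmMdef
  have hmP0 : 0 ≤ mP := ENNReal.toReal_nonneg
  have hmM0 : 0 ≤ mM := le_trans hmP0 (le_max_left _ _)
  -- kernelTail facts
  have hcov : ∀ (x : EuclideanSpace ℝ (Fin d)) (r : ℝ),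
      (∫ y in {y : EuclideanSpace ℝ (Fin d) | r ≤ ‖y‖}, krt x (x - y) ^ 2)
        = ∫ z in {z : EuclideanSpace ℝ (Fin d) | r ≤ ‖x - z‖}, krt x z ^ 2 :=
    fun x r => aux_cov x (fun z => krt x z ^ 2) r
  have hIle : ∀ (x : EuclideanSpace ℝ (Fin d)) (r : ℝ), (∫ z in {z : EuclideanSpace ℝ (Fin d) | r ≤ ‖x - z‖}, krt x z ^ 2) ≤ Csq :=
    fun x r => (setIntegral_le_integral (hsqint x)
      (Filter.Eventually.of_forall fun z => sq_nonneg _)).trans (hCsq x)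
  have hbddA : BddAbove (Set.range fun x : EuclideanSpace ℝ (Fin d) =>
      Real.sqrt (∫ y in {y : EuclideanSpace ℝ (Fin d) | a * R ≤ ‖y‖}, krt x (x - y) ^ 2)) := by
    refine ⟨Real.sqrt Csq, ?_⟩
    rintro _ ⟨x, rfl⟩
    exact Real.sqrt_le_sqrt ((hcov x (a * R)).le.trans (hIle x (a * R)))
  have hτle : ∀ x : EuclideanSpace ℝ (Fin d),
      Real.sqrt (∫ y in {y : EuclideanSpace ℝ (Fin d) | a * R ≤ ‖y‖}, krt x (x - y) ^ 2) ≤ τ :=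
    fun x => le_ciSup hbddA x
  have hτ0 : 0 ≤ τ := (Real.sqrt_nonneg _).trans (hτle 0)
  -- pointwise bounds for the two pieces
  have hkey1 : ∀ x ∈ sBᶜ, (∫ z in T, krt x z ^ 2) ≤ τ ^ 2 := by
    intro x hx
    have hxn : ‖x‖ < b * R := not_le.1 hx
    have hsub : T ⊆ {z : EuclideanSpace ℝ (Fin d) | a * R ≤ ‖x - z‖} := by
      intro z hz
      have hz' : R ≤ ‖z‖ := hz
      have h1 : ‖z‖ - ‖x‖ ≤ ‖x - z‖ := by
        rw [norm_sub_rev]; exact norm_sub_norm_le z x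
      have : a * R ≤ ‖x - z‖ := by nlinarith
      exact this
    calc (∫ z in T, krt x z ^ 2)
        ≤ ∫ z in {z : EuclideanSpace ℝ (Fin d) | a * R ≤ ‖x - z‖}, krt x z ^ 2 :=
          setIntegral_mono_set ((hsqint x).integrableOn)
            (Filter.Eventually.of_forall fun z => sq_nonneg _)
            (HasSubset.Subset.eventuallyLE hsub)
      _ = ∫ y in {y : EuclideanSpace ℝ (Fin d) | a * R ≤ ‖y‖}, krt x (x - y) ^ 2 := (hcov x (a * R)).symm
      _ = (Real.sqrt (∫ y in {y : EuclideanSpace ℝ (Fin d) | a * R ≤ ‖y‖}, krt x (x - y) ^ 2)) ^ 2 :=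
          (Real.sq_sqrt (integral_nonneg fun y => sq_nonneg _)).symm
      _ ≤ τ ^ 2 := pow_le_pow_left₀ (Real.sqrt_nonneg _) (hτle x) 2
  have hkey2 : ∀ x ∈ sB, (∫ z in T, krt x z ^ 2) ≤ Kinf := by
    intro x _
    have h1 : (∫ z in T, krt x z ^ 2) ≤ ∫ z, krt x z ^ 2 :=
      setIntegral_le_integral (hsqint x) (Filter.Eventually.of_forall fun z => sq_nonneg _)
    have h2 : (∫ z, krt x z ^ 2) = k x x := by
      rw [hk]; congr 1; funext z; ring
    calc (∫ z in T, krt x z ^ 2) ≤ k x x := h1.trans_eq h2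
      _ ≤ |k x x| := le_abs_self _
      _ ≤ Kinf := hKinf x x
  -- piece functions
  set fP1 : EuclideanSpace ℝ (Fin d) → ℝ := fun z => ∫ x in sBᶜ, krt x z ∂P with hfP1
  set fP2 : EuclideanSpace ℝ (Fin d) → ℝ := fun z => ∫ x in sB, krt x z ∂P with hfP2
  set fQ1 : EuclideanSpace ℝ (Fin d) → ℝ := fun z => ∫ x in sBᶜ, krt x z ∂Q with hfQ1
  set fQ2 : EuclideanSpace ℝ (Fin d) → ℝ := fun z => ∫ x in sB, krt x z ∂Q with hfQ2
  -- measurability of mean embeddings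
  have hSM : ∀ (μ' : Measure (EuclideanSpace ℝ (Fin d))) [SFinite μ'],
      StronglyMeasurable (fun z : EuclideanSpace ℝ (Fin d) => ∫ x, krt x z ∂μ') := by
    intro μ' _
    exact hmeas.stronglyMeasurable.integral_prod_left'
  have hgm : AEStronglyMeasurable g volume := by
    exact (((hSM P).sub (hSM Q))).aestronglyMeasurable
  -- eLpNorm bounds for the pieces
  have hpiece1 : ∀ (μ' : Measure (EuclideanSpace ℝ (Fin d))), IsProbabilityMeasure μ' →
      (∀ z, Integrable (fun x => krt x z) μ') →
      eLpNorm (fun z => ∫ x in sBᶜ, krt x z ∂μ') 2 (volume.restrict T)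
        ≤ ENNReal.ofReal τ := by
    intro μ' hprob hint
    rw [aux_eLpNorm_sq]
    apply aux_rpow_half_le hτ0
    calc ∫⁻ z in T, ENNReal.ofReal ((∫ x in sBᶜ, krt x z ∂μ') ^ 2)
        ≤ μ' sBᶜ * (ENNReal.ofReal (τ ^ 2) * μ' sBᶜ) :=
          aux_piece krt hmeas hsqint μ' hint sBᶜ hsB.compl T (τ ^ 2) hkey1
      _ ≤ 1 * (ENNReal.ofReal (τ ^ 2) * 1) := by gcongr <;> exact prob_le_one
      _ = ENNReal.ofReal (τ ^ 2) := by rw [one_mul, mul_one]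
  have hpiece2 : ∀ (μ' : Measure (EuclideanSpace ℝ (Fin d))), IsProbabilityMeasure μ' →
      (∀ z, Integrable (fun x => krt x z) μ') →
      eLpNorm (fun z => ∫ x in sB, krt x z ∂μ') 2 (volume.restrict T)
        ≤ ENNReal.ofReal (Real.sqrt Kinf * (μ' sB).toReal) := by
    intro μ' hprob hint
    rw [aux_eLpNorm_sq]
    apply aux_rpow_half_le (by positivity)
    have hfin : μ' sB ≠ ⊤ := measure_ne_top _ _
    calc ∫⁻ z in T, ENNReal.ofReal ((∫ x in sB, krt x z ∂μ') ^ 2)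
        ≤ μ' sB * (ENNReal.ofReal Kinf * μ' sB) :=
          aux_piece krt hmeas hsqint μ' hint sB hsB T Kinf hkey2
      _ = ENNReal.ofReal ((μ' sB).toReal) * (ENNReal.ofReal Kinf
            * ENNReal.ofReal ((μ' sB).toReal)) := by rw [ENNReal.ofReal_toReal hfin]
      _ = ENNReal.ofReal ((μ' sB).toReal * (Kinf * (μ' sB).toReal)) := by
          rw [ENNReal.ofReal_mul ENNReal.toReal_nonneg,
            ENNReal.ofReal_mul hK0]
      _ = ENNReal.ofReal ((Real.sqrt Kinf * (μ' sB).toReal) ^ 2) := by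
          congr 1
          rw [mul_pow, Real.sq_sqrt hK0]
          ring
  -- measurability of the pieces
  have hfP1m : AEStronglyMeasurable (fun z => ∫ x in sBᶜ, krt x z ∂P) (volume.restrict T) :=
    (hSM (P.restrict sBᶜ)).aestronglyMeasurable
  have hfP2m : AEStronglyMeasurable (fun z => ∫ x in sB, krt x z ∂P) (volume.restrict T) :=
    (hSM (P.restrict sB)).aestronglyMeasurable
  have hfQ1m : AEStronglyMeasurable (fun z => ∫ x in sBᶜ, krt x z ∂Q) (volume.restrict T) :=
    (hSM (Q.restrict sBᶜ)).aestronglyMeasurable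
  have hfQ2m : AEStronglyMeasurable (fun z => ∫ x in sB, krt x z ∂Q) (volume.restrict T) :=
    (hSM (Q.restrict sB)).aestronglyMeasurable
  have hgz : ∀ z, meanEmbed P krt z - meanEmbed Q krt z = g z := fun z => by rw [hgdef]
  -- decomposition of g
  have hgsplit : g = fun z =>
      ((∫ x in sB, krt x z ∂P) + (∫ x in sBᶜ, krt x z ∂P))
        - ((∫ x in sB, krt x z ∂Q) + (∫ x in sBᶜ, krt x z ∂Q)) := by
    funext z
    have hp := integral_add_compl hsB (hPint z)
    have hq := integral_add_compl hsB (hQint z)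
    rw [hgdef]
    simp only [meanEmbed]
    rw [← hp, ← hq]
  -- bounds on the tail part
  have hsqK : 0 ≤ Real.sqrt Kinf * mM := mul_nonneg (Real.sqrt_nonneg _) hmM0
  have hP2' : eLpNorm (fun z => ∫ x in sB, krt x z ∂P) 2 (volume.restrict T)
      ≤ ENNReal.ofReal (Real.sqrt Kinf * mM) := by
    refine (hpiece2 P inferInstance hPint).trans (ENNReal.ofReal_le_ofReal ?_)
    have : (P sB).toReal = mP := by rw [hmPdef]; rfl
    rw [this]
    exact mul_le_mul_of_nonneg_left (le_max_left mP mQ) (Real.sqrt_nonneg _)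
  have hQ2' : eLpNorm (fun z => ∫ x in sB, krt x z ∂Q) 2 (volume.restrict T)
      ≤ ENNReal.ofReal (Real.sqrt Kinf * mM) := by
    refine (hpiece2 Q inferInstance hQint).trans (ENNReal.ofReal_le_ofReal ?_)
    have : (Q sB).toReal = mQ := by rw [hmQdef]; rfl
    rw [this]
    exact mul_le_mul_of_nonneg_left (le_max_right mP mQ) (Real.sqrt_nonneg _)
  have heT : eLpNorm g 2 (volume.restrict T)
      ≤ ENNReal.ofReal (2 * τ + 2 * (Real.sqrt Kinf * mM)) := by
    calc eLpNorm g 2 (volume.restrict T)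
        = eLpNorm ((fun z => (∫ x in sB, krt x z ∂P) + (∫ x in sBᶜ, krt x z ∂P))
            - (fun z => (∫ x in sB, krt x z ∂Q) + (∫ x in sBᶜ, krt x z ∂Q))) 2
            (volume.restrict T) := by rw [hgsplit]; rfl
      _ ≤ eLpNorm (fun z => (∫ x in sB, krt x z ∂P) + (∫ x in sBᶜ, krt x z ∂P)) 2
            (volume.restrict T)
          + eLpNorm (fun z => (∫ x in sB, krt x z ∂Q) + (∫ x in sBᶜ, krt x z ∂Q)) 2
            (volume.restrict T) :=
          eLpNorm_sub_le (hfP2m.add hfP1m) (hfQ2m.add hfQ1m) one_le_two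
      _ = eLpNorm ((fun z => ∫ x in sB, krt x z ∂P) + (fun z => ∫ x in sBᶜ, krt x z ∂P)) 2
            (volume.restrict T)
          + eLpNorm ((fun z => ∫ x in sB, krt x z ∂Q) + (fun z => ∫ x in sBᶜ, krt x z ∂Q)) 2
            (volume.restrict T) := rfl
      _ ≤ (eLpNorm (fun z => ∫ x in sB, krt x z ∂P) 2 (volume.restrict T)
            + eLpNorm (fun z => ∫ x in sBᶜ, krt x z ∂P) 2 (volume.restrict T))
          + (eLpNorm (fun z => ∫ x in sB, krt x z ∂Q) 2 (volume.restrict T)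
            + eLpNorm (fun z => ∫ x in sBᶜ, krt x z ∂Q) 2 (volume.restrict T)) :=
          add_le_add (eLpNorm_add_le hfP2m hfP1m one_le_two)
            (eLpNorm_add_le hfQ2m hfQ1m one_le_two)
      _ ≤ (ENNReal.ofReal (Real.sqrt Kinf * mM) + ENNReal.ofReal τ)
          + (ENNReal.ofReal (Real.sqrt Kinf * mM) + ENNReal.ofReal τ) :=
          add_le_add (add_le_add hP2' (hpiece1 P inferInstance hPint))
            (add_le_add hQ2' (hpiece1 Q inferInstance hQint))
      _ = ENNReal.ofReal (2 * τ + 2 * (Real.sqrt Kinf * mM)) := by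
          rw [← ENNReal.ofReal_add hsqK hτ0, ← ENNReal.ofReal_add (add_nonneg hsqK hτ0)
            (add_nonneg hsqK hτ0)]
          congr 1
          ring
  -- the near part
  set cA : ℝ := Real.sqrt (Real.pi ^ ((d : ℝ) / 2) / Real.Gamma ((d : ℝ) / 2 + 1))
      * R ^ ((d : ℝ) / 2) * S with hcAdef
  have hΓ : 0 < Real.Gamma ((d : ℝ) / 2 + 1) := Real.Gamma_pos_of_pos (by positivity)
  have hcA0 : 0 ≤ cA := by
    rw [hcAdef]
    exact mul_nonneg (mul_nonneg (Real.sqrt_nonneg _) (Real.rpow_nonneg hR _)) hS0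
  have hTc : Tᶜ = Metric.ball (0 : EuclideanSpace ℝ (Fin d)) R := by
    rw [hTdef]
    ext z
    simp [not_le, mem_ball_zero_iff]
  have hvol : volume Tᶜ
      = ENNReal.ofReal (R ^ d * (Real.sqrt Real.pi ^ d / Real.Gamma ((d : ℝ) / 2 + 1))) := by
    rw [hTc, EuclideanSpace.volume_ball]
    simp only [Fintype.card_fin]
    rw [← ENNReal.ofReal_pow hR, ← ENNReal.ofReal_mul (pow_nonneg hR d)]
  have hA2 : (R ^ ((d : ℝ) / 2)) ^ 2 = R ^ d := by
    rw [← Real.rpow_natCast (R ^ ((d : ℝ) / 2)) 2, ← Real.rpow_mul hR]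
    rw [show (d : ℝ) / 2 * (2 : ℕ) = (d : ℝ) by push_cast; ring]
    exact Real.rpow_natCast R d
  have hA3 : Real.sqrt Real.pi ^ d = Real.pi ^ ((d : ℝ) / 2) := by
    rw [Real.sqrt_eq_rpow, ← Real.rpow_natCast (Real.pi ^ ((1 : ℝ) / 2)) d,
      ← Real.rpow_mul Real.pi_nonneg]
    congr 1
    push_cast
    ring
  have hcA2 : S ^ 2 * (R ^ d * (Real.sqrt Real.pi ^ d / Real.Gamma ((d : ℝ) / 2 + 1)))
      = cA ^ 2 := by
    rw [hcAdef, mul_pow, mul_pow,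
      Real.sq_sqrt (div_nonneg (Real.rpow_nonneg Real.pi_nonneg _) hΓ.le), hA2, hA3]
    ring
  have heC : eLpNorm g 2 (volume.restrict Tᶜ) ≤ ENNReal.ofReal cA := by
    rw [aux_eLpNorm_sq]
    apply aux_rpow_half_le hcA0
    calc ∫⁻ z in Tᶜ, ENNReal.ofReal (g z ^ 2)
        ≤ ∫⁻ _z in Tᶜ, ENNReal.ofReal (S ^ 2) := by
          apply lintegral_mono
          intro z
          apply ENNReal.ofReal_le_ofReal
          rw [← sq_abs (g z)]
          exact pow_le_pow_left₀ (abs_nonneg _) ((hgz z) ▸ hS z) 2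
      _ = ENNReal.ofReal (S ^ 2) * volume Tᶜ := setLIntegral_const _ _
      _ = ENNReal.ofReal (S ^ 2)
            * ENNReal.ofReal (R ^ d * (Real.sqrt Real.pi ^ d
              / Real.Gamma ((d : ℝ) / 2 + 1))) := by rw [hvol]
      _ = ENNReal.ofReal (S ^ 2 * (R ^ d * (Real.sqrt Real.pi ^ d
            / Real.Gamma ((d : ℝ) / 2 + 1)))) := (ENNReal.ofReal_mul (sq_nonneg S)).symm
      _ = ENNReal.ofReal (cA ^ 2) := by rw [hcA2]
  -- splitting the whole space
  have hsplit : eLpNorm g 2 volume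
      ≤ eLpNorm g 2 (volume.restrict Tᶜ) + eLpNorm g 2 (volume.restrict T) := by
    rw [aux_eLpNorm_sq g volume, aux_eLpNorm_sq, aux_eLpNorm_sq]
    have hadd : ∫⁻ z, ENNReal.ofReal (g z ^ 2)
        = (∫⁻ z in Tᶜ, ENNReal.ofReal (g z ^ 2)) + ∫⁻ z in T, ENNReal.ofReal (g z ^ 2) := by
      rw [add_comm, lintegral_add_compl _ hT]
    rw [hadd]
    exact ENNReal.rpow_add_le_add_rpow _ _ (by norm_num) (by norm_num)
  -- conclusion
  have hfinal : eLpNorm g 2 volume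
      ≤ ENNReal.ofReal (cA + 2 * τ + 2 * Real.sqrt Kinf * mM) := by
    refine hsplit.trans ((add_le_add heC heT).trans_eq ?_)
    rw [← ENNReal.ofReal_add hcA0 (add_nonneg (by linarith) (by linarith))]
    congr 1
    ring
  have hgoal : Real.sqrt (∫ z, (meanEmbed P krt z - meanEmbed Q krt z) ^ 2)
      = (eLpNorm g 2 volume).toReal := by
    simp only [hgz]
    exact aux_sqrt_integral_sq g volume hgm
  rw [hgoal]
  exact ENNReal.toReal_le_of_le_ofReal
    (by positivity) hfinal
end

section
/- Let d ≥ 1 and let k_rt : ℝᵈ × ℝᵈ → ℝ be measurable with sup_x ∫_{ℝᵈ} k_rt(x,z)² dz < ∞, and define k(x,y) := ∫_{ℝᵈ} k_rt(x,z) k_rt(y,z) dz. Then for any Borel probability measures P and Q on ℝᵈ such that x ↦ k_rt(x,z) is P-integrable and Q-integrable for every z: ∫∫ k(x,y) dP(x) dP(y) − 2 ∫∫ k(x,y) dP(x) dQ(y) + ∫∫ k(x,y) dQ(x) dQ(y) = ∫_{ℝᵈ} (Pk_rt(z) − Qk_rt(z))² dz; in particular, the left-hand side is nonnegative. -/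
open MeasureTheory

section Aux

open ENNReal

/-- Cauchy–Schwarz for lintegral on a probability measure. -/
private lemma sq_lintegral_le {α : Type*} [MeasurableSpace α] (μ : Measure α)
    [IsProbabilityMeasure μ] {f : α → ℝ≥0∞} (hf : AEMeasurable f μ) :
    (∫⁻ a, f a ∂μ) ^ 2 ≤ ∫⁻ a, f a ^ 2 ∂μ := by
  have h2 : (2 : ℝ).HolderConjugate 2 := Real.HolderConjugate.two_two
  have key := ENNReal.lintegral_mul_le_Lp_mul_Lq μ h2 hf
    (aemeasurable_const : AEMeasurable (fun _ => (1 : ℝ≥0∞)) μ)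
  simp only [Pi.mul_apply, mul_one, ENNReal.one_rpow, lintegral_const, measure_univ,
    one_mul, ENNReal.one_rpow] at key
  have key2 : (∫⁻ a, f a ∂μ) ≤ (∫⁻ a, f a ^ (2:ℝ) ∂μ) ^ (1/2 : ℝ) := by
    simpa using key
  calc (∫⁻ a, f a ∂μ) ^ 2 = ((∫⁻ a, f a ∂μ)) ^ (2:ℝ) := by
        rw [← ENNReal.rpow_natCast]; norm_num
    _ ≤ ((∫⁻ a, f a ^ (2:ℝ) ∂μ) ^ (1/2 : ℝ)) ^ (2:ℝ) := by
        exact ENNReal.rpow_le_rpow key2 (by norm_num)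
    _ = (∫⁻ a, f a ^ (2:ℝ) ∂μ) := by
        rw [← ENNReal.rpow_mul]; norm_num
    _ = ∫⁻ a, f a ^ 2 ∂μ := by
        congr 1; funext a; rw [← ENNReal.rpow_natCast]; norm_num

variable {d : ℕ}
  {krt : EuclideanSpace ℝ (Fin d) → EuclideanSpace ℝ (Fin d) → ℝ}

private lemma embed_sm (μ : Measure (EuclideanSpace ℝ (Fin d))) [SFinite μ]
    (hmeas : Measurable (Function.uncurry krt)) :
    StronglyMeasurable (meanEmbed μ krt) := by
  have h : StronglyMeasurable
      (fun p : EuclideanSpace ℝ (Fin d) × EuclideanSpace ℝ (Fin d) => krt p.2 p.1) :=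
    (hmeas.comp measurable_swap).stronglyMeasurable
  exact h.integral_prod_right'

private lemma embed_sq_int (μ : Measure (EuclideanSpace ℝ (Fin d))) [IsProbabilityMeasure μ]
    (hmeas : Measurable (Function.uncurry krt))
    (hsqint : ∀ x, Integrable (fun z => (krt x z) ^ 2))
    (Csq : ℝ) (hCsq : ∀ x, (∫ z, (krt x z) ^ 2) ≤ Csq) :
    Integrable (fun z => (meanEmbed μ krt z) ^ 2) := by
  set F := meanEmbed μ krt with hF
  have hFsm : StronglyMeasurable F := embed_sm μ hmeas
  have hF2sm : StronglyMeasurable fun z => F z ^ 2 := by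
    have h : StronglyMeasurable fun z => F z * F z := hFsm.mul hFsm; simpa [sq] using h
  refine ⟨hF2sm.aestronglyMeasurable, ?_⟩
  show (∫⁻ z, (‖F z ^ 2‖₊ : ℝ≥0∞)) < ⊤
  have step1 : ∀ z, (‖F z ^ 2‖₊ : ℝ≥0∞) ≤ ∫⁻ x, (‖krt x z‖₊ : ℝ≥0∞) ^ 2 ∂μ := by
    intro z
    have h1 : (‖F z‖₊ : ℝ≥0∞) ≤ ∫⁻ x, (‖krt x z‖₊ : ℝ≥0∞) ∂μ :=
      enorm_integral_le_lintegral_enorm _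
    have hm : AEMeasurable (fun x => (‖krt x z‖₊ : ℝ≥0∞)) μ :=
      ((hmeas.comp (measurable_id.prodMk measurable_const)).enorm).aemeasurable
    calc (‖F z ^ 2‖₊ : ℝ≥0∞) = (‖F z‖₊ : ℝ≥0∞) ^ 2 := by
          rw [sq, sq, nnnorm_mul]; push_cast; ring
      _ ≤ (∫⁻ x, (‖krt x z‖₊ : ℝ≥0∞) ∂μ) ^ 2 := by gcongr
      _ ≤ ∫⁻ x, (‖krt x z‖₊ : ℝ≥0∞) ^ 2 ∂μ := sq_lintegral_le μ hm
  have hswapmeas : Measurable (Function.uncurry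
      fun (z x : EuclideanSpace ℝ (Fin d)) => (‖krt x z‖₊ : ℝ≥0∞) ^ 2) := by
    exact ((hmeas.comp measurable_swap).enorm).pow_const 2
  calc ∫⁻ z, ‖F z ^ 2‖₊ ≤ ∫⁻ z, ∫⁻ x, (‖krt x z‖₊ : ℝ≥0∞) ^ 2 ∂μ := lintegral_mono step1
    _ = ∫⁻ x, ∫⁻ z, (‖krt x z‖₊ : ℝ≥0∞) ^ 2 ∂volume ∂μ :=
        lintegral_lintegral_swap hswapmeas.aemeasurable
    _ ≤ ∫⁻ x, ENNReal.ofReal Csq ∂μ := by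
        refine lintegral_mono fun x => ?_
        have heq : ∫⁻ z, (‖krt x z‖₊ : ℝ≥0∞) ^ 2 = ENNReal.ofReal (∫ z, (krt x z) ^ 2) := by
          rw [ofReal_integral_eq_lintegral_ofReal (hsqint x)
            (Filter.Eventually.of_forall fun z => sq_nonneg _)]
          congr 1; funext z
          rw [← Real.enorm_eq_ofReal (sq_nonneg _), sq, sq, enorm_mul]; rfl
        rw [heq]
        exact ENNReal.ofReal_le_ofReal (hCsq x)
    _ = ENNReal.ofReal Csq := by simp
    _ < ⊤ := ENNReal.ofReal_lt_top


private lemma krt_sq_prod_int (μ : Measure (EuclideanSpace ℝ (Fin d))) [IsProbabilityMeasure μ]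
    (hmeas : Measurable (Function.uncurry krt))
    (hsqint : ∀ x, Integrable (fun z => (krt x z) ^ 2))
    (Csq : ℝ) (hCsq : ∀ x, (∫ z, (krt x z) ^ 2) ≤ Csq) :
    Integrable (fun p : EuclideanSpace ℝ (Fin d) × EuclideanSpace ℝ (Fin d) =>
      (krt p.1 p.2) ^ 2) (μ.prod volume) := by
  have h1 : AEStronglyMeasurable
      (fun p : EuclideanSpace ℝ (Fin d) × EuclideanSpace ℝ (Fin d) => (krt p.1 p.2) ^ 2)
      (μ.prod volume) :=
    ((hmeas.pow_const 2).stronglyMeasurable).aestronglyMeasurable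
  rw [integrable_prod_iff h1]
  refine ⟨Filter.Eventually.of_forall fun x => hsqint x, ?_⟩
  have hsm : StronglyMeasurable fun x => ∫ z, ‖(krt x z) ^ 2‖ := by
    have : StronglyMeasurable
        (fun p : EuclideanSpace ℝ (Fin d) × EuclideanSpace ℝ (Fin d) => ‖(krt p.1 p.2) ^ 2‖) :=
      ((hmeas.pow_const 2).norm).stronglyMeasurable
    exact this.integral_prod_right'
  refine Integrable.mono' (integrable_const Csq) hsm.aestronglyMeasurable
    (Filter.Eventually.of_forall fun x => ?_)
  have heq : (∫ z, ‖(krt x z) ^ 2‖) = ∫ z, (krt x z) ^ 2 := by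
    congr 1; funext z; rw [Real.norm_eq_abs, abs_of_nonneg (sq_nonneg _)]
  rw [Real.norm_eq_abs, heq, abs_of_nonneg (integral_nonneg fun z => sq_nonneg _)]
  exact hCsq x

private lemma key_swap (μ : Measure (EuclideanSpace ℝ (Fin d))) [IsProbabilityMeasure μ]
    (hmeas : Measurable (Function.uncurry krt))
    (hsqint : ∀ x, Integrable (fun z => (krt x z) ^ 2))
    (Csq : ℝ) (hCsq : ∀ x, (∫ z, (krt x z) ^ 2) ≤ Csq)
    (H : EuclideanSpace ℝ (Fin d) → ℝ) (Hsm : StronglyMeasurable H)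
    (Hsq : Integrable (fun z => H z ^ 2)) :
    ∫ x, (∫ z, krt x z * H z) ∂μ = ∫ z, meanEmbed μ krt z * H z := by
  have hsnd : Integrable (fun p : EuclideanSpace ℝ (Fin d) × EuclideanSpace ℝ (Fin d) =>
      (H p.2) ^ 2) (μ.prod volume) := by
    have h1 : AEStronglyMeasurable
        (fun p : EuclideanSpace ℝ (Fin d) × EuclideanSpace ℝ (Fin d) => (H p.2) ^ 2)
        (μ.prod volume) :=
      (by have h : AEStronglyMeasurable (fun p : EuclideanSpace ℝ (Fin d) × EuclideanSpace ℝ (Fin d) => H p.2 * H p.2) (μ.prod volume) := ((Hsm.comp_measurable measurable_snd).mul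
        (Hsm.comp_measurable measurable_snd)).aestronglyMeasurable; simpa [sq, Function.comp] using h :
        AEStronglyMeasurable _ _)
    rw [integrable_prod_iff h1]
    refine ⟨Filter.Eventually.of_forall fun _ => Hsq, ?_⟩
    simpa using integrable_const (μ := μ) (∫ z, ‖(H z) ^ 2‖)
  have prodint : Integrable (fun p : EuclideanSpace ℝ (Fin d) × EuclideanSpace ℝ (Fin d) =>
      krt p.1 p.2 * H p.2) (μ.prod volume) := by
    refine Integrable.mono' ((krt_sq_prod_int μ hmeas hsqint Csq hCsq).add hsnd)
      (hmeas.stronglyMeasurable.mul (Hsm.comp_measurable measurable_snd)).aestronglyMeasurable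
      (Filter.Eventually.of_forall fun p => ?_)
    have := sq_nonneg (|krt p.1 p.2| - |H p.2|)
    simp only [Pi.add_apply, Real.norm_eq_abs, abs_mul]
    nlinarith [sq_abs (krt p.1 p.2), sq_abs (H p.2), abs_nonneg (krt p.1 p.2), abs_nonneg (H p.2)]
  have swap := integral_integral_swap (f := fun x z => krt x z * H z) prodint
  rw [swap]
  congr 1; funext z
  exact integral_mul_const (H z) fun x => krt x z

private lemma double_int (μ ν : Measure (EuclideanSpace ℝ (Fin d)))
    [IsProbabilityMeasure μ] [IsProbabilityMeasure ν]
    (hmeas : Measurable (Function.uncurry krt))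
    (hsqint : ∀ x, Integrable (fun z => (krt x z) ^ 2))
    (Csq : ℝ) (hCsq : ∀ x, (∫ z, (krt x z) ^ 2) ≤ Csq) :
    ∫ x, ∫ y, (∫ z, krt x z * krt y z) ∂ν ∂μ
      = ∫ z, meanEmbed μ krt z * meanEmbed ν krt z := by
  have inner : ∀ x, (∫ y, (∫ z, krt x z * krt y z) ∂ν)
      = ∫ z, krt x z * meanEmbed ν krt z := by
    intro x
    have hxsm : StronglyMeasurable fun z => krt x z :=
      (hmeas.comp (measurable_const.prodMk measurable_id)).stronglyMeasurable
    have h := key_swap ν hmeas hsqint Csq hCsq (fun z => krt x z) hxsm (hsqint x)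
    have e1 : ∀ y, (∫ z, krt x z * krt y z) = ∫ z, krt y z * krt x z := by
      intro y; congr 1; funext z; ring
    simp_rw [e1]
    rw [h]
    congr 1; funext z; ring
  simp_rw [inner]
  exact key_swap μ hmeas hsqint Csq hCsq (meanEmbed ν krt) (embed_sm ν hmeas)
    (embed_sq_int ν hmeas hsqint Csq hCsq)

end Aux

/-- Saitoh-type identity: for `k(x,y) = ∫ k_rt(x,z) k_rt(y,z) dz`,
`∬k dP dP − 2∬k dP dQ + ∬k dQ dQ = ∫ (Pk_rt(z) − Qk_rt(z))² dz ≥ 0`;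
the left-hand side equals `MMD_k(P,Q)²`. -/
theorem mmd_sq_eq_L2_dist_of_mean_embeddings {d : ℕ} (hd : 1 ≤ d)
    (krt : EuclideanSpace ℝ (Fin d) → EuclideanSpace ℝ (Fin d) → ℝ)
    (hmeas : Measurable (Function.uncurry krt))
    (hsqint : ∀ x, Integrable (fun z => (krt x z) ^ 2))
    (Csq : ℝ) (hCsq : ∀ x, (∫ z, (krt x z) ^ 2) ≤ Csq)
    (k : EuclideanSpace ℝ (Fin d) → EuclideanSpace ℝ (Fin d) → ℝ)
    (hk : ∀ x y, k x y = ∫ z, krt x z * krt y z)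
    (P Q : Measure (EuclideanSpace ℝ (Fin d)))
    [IsProbabilityMeasure P] [IsProbabilityMeasure Q]
    (hPint : ∀ z, Integrable (fun x => krt x z) P)
    (hQint : ∀ z, Integrable (fun x => krt x z) Q) :
    ((∫ x, ∫ y, k x y ∂P ∂P) - 2 * (∫ y, ∫ x, k x y ∂P ∂Q) + (∫ x, ∫ y, k x y ∂Q ∂Q)
        = ∫ z, (meanEmbed P krt z - meanEmbed Q krt z) ^ 2) ∧
    (0 ≤ (∫ x, ∫ y, k x y ∂P ∂P) - 2 * (∫ y, ∫ x, k x y ∂P ∂Q) + (∫ x, ∫ y, k x y ∂Q ∂Q)) := by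
  set a := meanEmbed P krt with ha
  set b := meanEmbed Q krt with hb
  have ha2 : Integrable (fun z => a z ^ 2) := embed_sq_int P hmeas hsqint Csq hCsq
  have hb2 : Integrable (fun z => b z ^ 2) := embed_sq_int Q hmeas hsqint Csq hCsq
  have haa : Integrable (fun z => a z * a z) := by simpa [sq] using ha2
  have hbb : Integrable (fun z => b z * b z) := by simpa [sq] using hb2
  have hab : Integrable (fun z => a z * b z) := by
    refine Integrable.mono' (ha2.add hb2)
      ((embed_sm P hmeas).mul (embed_sm Q hmeas)).aestronglyMeasurable
      (Filter.Eventually.of_forall fun z => ?_)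
    have := sq_nonneg (|a z| - |b z|)
    simp only [Pi.add_apply, Real.norm_eq_abs, abs_mul]
    nlinarith [sq_abs (a z), sq_abs (b z)]
  -- the three double integrals
  have hPP : (∫ x, ∫ y, k x y ∂P ∂P) = ∫ z, a z * a z := by
    simp_rw [hk]; exact double_int P P hmeas hsqint Csq hCsq
  have hQQ : (∫ x, ∫ y, k x y ∂Q ∂Q) = ∫ z, b z * b z := by
    simp_rw [hk]; exact double_int Q Q hmeas hsqint Csq hCsq
  have hPQ : (∫ y, ∫ x, k x y ∂P ∂Q) = ∫ z, b z * a z := by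
    have e : ∀ y, (∫ x, k x y ∂P) = ∫ x, (∫ z, krt y z * krt x z) ∂P := by
      intro y
      congr 1; funext x
      rw [hk]; congr 1; funext z; ring
    simp_rw [e]
    exact double_int Q P hmeas hsqint Csq hCsq
  have hmain : (∫ x, ∫ y, k x y ∂P ∂P) - 2 * (∫ y, ∫ x, k x y ∂P ∂Q)
      + (∫ x, ∫ y, k x y ∂Q ∂Q) = ∫ z, (a z - b z) ^ 2 := by
    rw [hPP, hQQ, hPQ]
    have e2 : (fun z => (a z - b z) ^ 2)
        = fun z => (a z * a z - 2 * (a z * b z)) + b z * b z := by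
      funext z; ring
    have I1 : Integrable (fun z => 2 * (a z * b z)) := hab.const_mul 2
    have E1 : (∫ z, (a z * a z - 2 * (a z * b z)))
        = (∫ z, a z * a z) - ∫ z, 2 * (a z * b z) := integral_sub haa I1
    have E2 : (∫ z, (a z * a z - 2 * (a z * b z) + b z * b z))
        = (∫ z, (a z * a z - 2 * (a z * b z))) + ∫ z, b z * b z :=
      integral_add (haa.sub I1) hbb
    rw [e2, E2, E1, integral_const_mul]
    have e3 : (∫ z, b z * a z) = ∫ z, a z * b z :=
      integral_congr_ae (Filter.Eventually.of_forall fun z => mul_comm _ _)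
    rw [e3]
  exact ⟨hmain, hmain ▸ integral_nonneg fun z => sq_nonneg _⟩
end

section
/- Let H be a real inner product space, let f, u ∈ H, let c > 0 and σ ≥ 0, and set σ'² := σ² + ‖f‖² · (1 + (σ²/c²)(‖f‖² − 2c))₊, where (t)₊ := max(t,0). Then (1/2)⟨f,u⟩² + (σ²/2) ‖u − (⟨f,u⟩/c) f‖² ≤ (σ'²/2) ‖u‖². -/
open RealInnerProductSpace

/-- Key exponent computation for the self-balancing Hilbert walk: in a real inner
product space, for `c > 0`, `σ ≥ 0`, and
`σ'² := σ² + ‖f‖²(1 + (σ²/c²)(‖f‖² − 2c))₊`,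
`(1/2)⟨f,u⟩² + (σ²/2)‖u − (⟨f,u⟩/c)f‖² ≤ (σ'²/2)‖u‖²`. -/
theorem self_balancing_exponent_bound {H : Type*} [NormedAddCommGroup H]
    [InnerProductSpace ℝ H] (f u : H) (c σ : ℝ) (hc : 0 < c) (hσ : 0 ≤ σ) :
    (1 / 2) * ⟪f, u⟫ ^ 2 + (σ ^ 2 / 2) * ‖u - (⟪f, u⟫ / c) • f‖ ^ 2
      ≤ ((σ ^ 2 + ‖f‖ ^ 2 * max (1 + (σ ^ 2 / c ^ 2) * (‖f‖ ^ 2 - 2 * c)) 0) / 2) * ‖u‖ ^ 2 := by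
  set t := ⟪f, u⟫ with ht
  have hexp : ‖u - (t / c) • f‖ ^ 2 = ‖u‖ ^ 2 - 2 * (t / c) * t + (t / c) ^ 2 * ‖f‖ ^ 2 := by
    rw [norm_sub_sq_real, inner_smul_right, norm_smul]
    have h1 : (inner ℝ u f : ℝ) = t := by rw [ht, real_inner_comm]
    rw [h1]
    simp only [Real.norm_eq_abs, mul_pow, sq_abs]
    ring
  rw [hexp]
  have hcs : t ^ 2 ≤ ‖f‖ ^ 2 * ‖u‖ ^ 2 := by
    have h := abs_real_inner_le_norm f u
    nlinarith [abs_nonneg t, norm_nonneg f, norm_nonneg u, sq_abs t]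
  have hc2 : (0:ℝ) < c ^ 2 := by positivity
  rcases le_or_gt (1 + (σ ^ 2 / c ^ 2) * (‖f‖ ^ 2 - 2 * c)) 0 with h | h
  · rw [max_eq_right h]
    have key : (1/2) * t ^ 2 * (1 + (σ ^ 2 / c ^ 2) * (‖f‖ ^ 2 - 2 * c)) ≤ 0 :=
      mul_nonpos_of_nonneg_of_nonpos (by positivity) h
    have e : (1/2) * t ^ 2 + (σ ^ 2 / 2) * (‖u‖ ^ 2 - 2 * (t / c) * t + (t / c) ^ 2 * ‖f‖ ^ 2)
        = σ ^ 2 / 2 * ‖u‖ ^ 2 + (1/2) * t ^ 2 * (1 + (σ ^ 2 / c ^ 2) * (‖f‖ ^ 2 - 2 * c)) := by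
      field_simp
      ring
    linarith [e ▸ (by linarith : σ ^ 2 / 2 * ‖u‖ ^ 2 + (1/2) * t ^ 2 * (1 + (σ ^ 2 / c ^ 2) * (‖f‖ ^ 2 - 2 * c)) ≤ σ ^ 2 / 2 * ‖u‖ ^ 2),
      e]
  · rw [max_eq_left h.le]
    have e : (1/2) * t ^ 2 + (σ ^ 2 / 2) * (‖u‖ ^ 2 - 2 * (t / c) * t + (t / c) ^ 2 * ‖f‖ ^ 2)
        = σ ^ 2 / 2 * ‖u‖ ^ 2 + (1/2) * t ^ 2 * (1 + (σ ^ 2 / c ^ 2) * (‖f‖ ^ 2 - 2 * c)) := by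
      field_simp
      ring
    rw [e]
    have : (1/2) * t ^ 2 * (1 + (σ ^ 2 / c ^ 2) * (‖f‖ ^ 2 - 2 * c))
        ≤ (1/2) * (‖f‖ ^ 2 * ‖u‖ ^ 2) * (1 + (σ ^ 2 / c ^ 2) * (‖f‖ ^ 2 - 2 * c)) := by
      apply mul_le_mul_of_nonneg_right _ h.le
      linarith
    nlinarith
end

section
/- Let (Ω, 𝓕, ℙ) be a probability space, H a separable real Hilbert space, σ ≥ 0, and W : Ω → H a measurable random element with 𝔼[exp(⟨W, u⟩)] ≤ exp(σ² ‖u‖²/2) for all u ∈ H. Let ε : Ω → ℝ be a random variable satisfying 𝔼[exp(t ε) | σ(W)] ≤ exp(t²/2) almost surely for every t ∈ ℝ. Fix f ∈ H and c > 0 and define W' := W − (⟨W, f⟩/c) f + ε f. Then for all u ∈ H, 𝔼[exp(⟨W', u⟩)] ≤ exp(σ'² ‖u‖²/2), where σ'² := σ² + ‖f‖² (1 + (σ²/c²)(‖f‖² − 2c))₊ and (t)₊ := max(t,0). -/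
open MeasureTheory RealInnerProductSpace

/-- One-step functional sub-Gaussianity of the self-balancing Hilbert walk: if `W` is
`σ` sub-Gaussian in the Hilbert space `H`, `ε` is conditionally `1` sub-Gaussian given
`σ(W)`, and `W' = W − (⟨W,f⟩/c)f + εf`, then `W'` is `σ'` sub-Gaussian with
`σ'² = σ² + ‖f‖²(1 + (σ²/c²)(‖f‖² − 2c))₊`. -/
theorem self_balancing_one_step_subGaussian {Ω : Type*} [MeasurableSpace Ω]
    (μ : Measure Ω) [IsProbabilityMeasure μ]
    {H : Type*} [NormedAddCommGroup H] [InnerProductSpace ℝ H] [CompleteSpace H]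
    [TopologicalSpace.SeparableSpace H] [MeasurableSpace H] [BorelSpace H]
    (σ : ℝ) (hσ : 0 ≤ σ) (W : Ω → H) (hW : Measurable W)
    (hWint : ∀ u : H, Integrable (fun ω => Real.exp ⟪W ω, u⟫) μ)
    (hWsub : ∀ u : H, (∫ ω, Real.exp ⟪W ω, u⟫ ∂μ) ≤ Real.exp (σ ^ 2 * ‖u‖ ^ 2 / 2))
    (ε : Ω → ℝ) (hε : Measurable ε)
    (hεint : ∀ t : ℝ, Integrable (fun ω => Real.exp (t * ε ω)) μ)
    (hεcond : ∀ t : ℝ, ∀ᵐ ω ∂μ,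
      (μ[fun ω => Real.exp (t * ε ω) | MeasurableSpace.comap W inferInstance]) ω
        ≤ Real.exp (t ^ 2 / 2))
    (f : H) (c : ℝ) (hc : 0 < c) :
    ∀ u : H,
      (∫ ω, Real.exp ⟪W ω - (⟪W ω, f⟫ / c) • f + ε ω • f, u⟫ ∂μ)
        ≤ Real.exp ((σ ^ 2 + ‖f‖ ^ 2 * max (1 + (σ ^ 2 / c ^ 2) * (‖f‖ ^ 2 - 2 * c)) 0)
            * ‖u‖ ^ 2 / 2) := by
  intro u
  set t : ℝ := ⟪f, u⟫ with ht
  set v : H := u - (t / c) • f with hv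
  have hmle := hW.comap_le
  set g : Ω → ℝ := fun ω => Real.exp ⟪W ω, v⟫ with hg
  set e : Ω → ℝ := fun ω => Real.exp (t * ε ω) with he
  -- pointwise rewrite of the exponent
  have hpt : ∀ ω, ⟪W ω - (⟪W ω, f⟫ / c) • f + ε ω • f, u⟫ = ⟪W ω, v⟫ + t * ε ω := by
    intro ω
    simp only [hv, inner_sub_left, inner_sub_right, inner_add_left, real_inner_smul_left,
      real_inner_smul_right]
    rw [ht]
    ring
  have hrw : (fun ω => Real.exp ⟪W ω - (⟪W ω, f⟫ / c) • f + ε ω • f, u⟫)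
      = fun ω => g ω * e ω := by
    funext ω; rw [hpt ω, Real.exp_add]
  -- measurability
  have hg_meas : Measurable g := (hW.inner measurable_const).exp
  have he_meas : Measurable e := (hε.const_mul t).exp
  have hg_sm : StronglyMeasurable[MeasurableSpace.comap W inferInstance] g := by
    have hWm : Measurable[MeasurableSpace.comap W inferInstance] W :=
      measurable_iff_comap_le.mpr le_rfl
    exact ((hWm.inner (measurable_const)).exp).stronglyMeasurable
  -- integrability of the product
  have hprod_int : Integrable (g * e) μ := by
    have hb : Integrable (fun ω =>
        (Real.exp ⟪W ω, (2 : ℝ) • v⟫ + Real.exp (2 * t * ε ω)) / 2) μ :=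
      ((hWint ((2 : ℝ) • v)).add (hεint (2 * t))).div_const 2
    refine hb.mono' ((hg_meas.mul he_meas).aestronglyMeasurable) ?_
    refine Filter.Eventually.of_forall fun ω => ?_
    have h1 : Real.exp ⟪W ω, (2 : ℝ) • v⟫ = Real.exp ⟪W ω, v⟫ ^ 2 := by
      rw [real_inner_smul_right, two_mul, Real.exp_add, sq]
    have h2 : Real.exp (2 * t * ε ω) = Real.exp (t * ε ω) ^ 2 := by
      rw [show 2 * t * ε ω = t * ε ω + t * ε ω by ring, Real.exp_add, sq]
    rw [h1, h2]
    simp only [Pi.mul_apply, hg, he]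
    have hgp := (Real.exp_pos ⟪W ω, v⟫).le
    have hep := (Real.exp_pos (t * ε ω)).le
    rw [Real.norm_eq_abs, abs_of_nonneg (mul_nonneg hgp hep)]
    nlinarith [sq_nonneg (Real.exp ⟪W ω, v⟫ - Real.exp (t * ε ω))]
  -- conditioning step
  have hcond : (∫ ω, g ω * e ω ∂μ) ≤ Real.exp (t ^ 2 / 2) * ∫ ω, g ω ∂μ := by
    have h1 : (∫ ω, g ω * e ω ∂μ) = ∫ ω, (μ[g * e | MeasurableSpace.comap W inferInstance]) ω ∂μ :=
      (integral_condExp hmle).symm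
    have h2 : μ[g * e | MeasurableSpace.comap W inferInstance] =ᵐ[μ] g * μ[e | MeasurableSpace.comap W inferInstance] :=
      condExp_mul_of_stronglyMeasurable_left hg_sm hprod_int (hεint t)
    have h3 : (∫ ω, (μ[g * e | MeasurableSpace.comap W inferInstance]) ω ∂μ) = ∫ ω, g ω * (μ[e | MeasurableSpace.comap W inferInstance]) ω ∂μ :=
      integral_congr_ae h2
    have h4 : (∫ ω, g ω * (μ[e | MeasurableSpace.comap W inferInstance]) ω ∂μ) ≤ ∫ ω, g ω * Real.exp (t ^ 2 / 2) ∂μ := by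
      refine integral_mono_ae ((integrable_condExp (f := g * e)).congr h2) ?_ ?_
      · exact (hWint v).mul_const _
      · filter_upwards [hεcond t] with ω hω
        exact mul_le_mul_of_nonneg_left hω (Real.exp_pos _).le
    rw [h1, h3]
    refine h4.trans ?_
    rw [integral_mul_const]
    ring_nf
    exact le_refl _
  -- sub-Gaussian bound on W part
  have hgsub : (∫ ω, g ω ∂μ) ≤ Real.exp (σ ^ 2 * ‖v‖ ^ 2 / 2) := hWsub v
  have hg_nonneg : 0 ≤ ∫ ω, g ω ∂μ := integral_nonneg fun ω => (Real.exp_pos _).le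
  have hchain : (∫ ω, Real.exp ⟪W ω - (⟪W ω, f⟫ / c) • f + ε ω • f, u⟫ ∂μ)
      ≤ Real.exp (t ^ 2 / 2 + σ ^ 2 * ‖v‖ ^ 2 / 2) := by
    rw [hrw]
    calc (∫ ω, g ω * e ω ∂μ) ≤ Real.exp (t ^ 2 / 2) * ∫ ω, g ω ∂μ := hcond
      _ ≤ Real.exp (t ^ 2 / 2) * Real.exp (σ ^ 2 * ‖v‖ ^ 2 / 2) :=
          mul_le_mul_of_nonneg_left hgsub (Real.exp_pos _).le
      _ = Real.exp (t ^ 2 / 2 + σ ^ 2 * ‖v‖ ^ 2 / 2) := (Real.exp_add _ _).symm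
  refine hchain.trans (Real.exp_le_exp.mpr ?_)
  -- final algebra
  have hv2 : ‖v‖ ^ 2 = ‖u‖ ^ 2 - 2 * (t / c) * t + (t / c) ^ 2 * ‖f‖ ^ 2 := by
    have h1 : ⟪u, f⟫ = t := by rw [ht, real_inner_comm]
    rw [hv, norm_sub_sq_real, real_inner_smul_right, h1, norm_smul, mul_pow, Real.norm_eq_abs, sq_abs]
    ring
  set A : ℝ := 1 + σ ^ 2 / c ^ 2 * (‖f‖ ^ 2 - 2 * c) with hA
  set M : ℝ := max A 0 with hMdef
  have hAM : A ≤ M := le_max_left _ _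
  have hM0 : (0 : ℝ) ≤ M := le_max_right _ _
  have hCS : t ^ 2 ≤ ‖f‖ ^ 2 * ‖u‖ ^ 2 := by
    have := abs_real_inner_le_norm f u
    calc t ^ 2 = |⟪f, u⟫| ^ 2 := by rw [sq_abs]
      _ ≤ (‖f‖ * ‖u‖) ^ 2 := by
          exact pow_le_pow_left₀ (abs_nonneg _) this 2
      _ = ‖f‖ ^ 2 * ‖u‖ ^ 2 := by ring
  have hkey : t ^ 2 * A ≤ ‖f‖ ^ 2 * ‖u‖ ^ 2 * M :=
    le_trans (mul_le_mul_of_nonneg_left hAM (sq_nonneg t))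
      (mul_le_mul_of_nonneg_right hCS hM0)
  have hid : t ^ 2 + σ ^ 2 * ‖v‖ ^ 2 = σ ^ 2 * ‖u‖ ^ 2 + t ^ 2 * A := by
    rw [hv2, hA]
    field_simp
    ring
  have : t ^ 2 / 2 + σ ^ 2 * ‖v‖ ^ 2 / 2 = (σ ^ 2 * ‖u‖ ^ 2 + t ^ 2 * A) / 2 := by
    rw [← hid]; ring
  rw [this]
  have : (σ ^ 2 + ‖f‖ ^ 2 * M) * ‖u‖ ^ 2 / 2
      = (σ ^ 2 * ‖u‖ ^ 2 + ‖f‖ ^ 2 * ‖u‖ ^ 2 * M) / 2 := by ring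
  rw [this]
  linarith
end

section
/- Let n ≥ 1, let a₁, …, a_n ≥ 0 and γ₁, …, γ_n ≥ 0 with γ* := max_{i≤n} γ_i > 0, and set c_i := max(γ_i σ_{i−1} a_i, a_i²). Define σ₀ := 0 and, for i = 1, …, n, σ_i² := σ_{i−1}² + a_i² (1 + (σ_{i−1}²/c_i²)(a_i² − 2c_i))₊ when a_i > 0 (so that c_i > 0), and σ_i² := σ_{i−1}² when a_i = 0, where (t)₊ := max(t,0). Then σ_n² ≤ ((max_{i≤n} a_i²)/4) · (γ* + 1/γ*)². -/
set_option maxHeartbeats 1000000 in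
lemma step_bound (A X t aa x : ℝ) (ht : 0 ≤ t) (ha : 0 < aa) (hx : 0 ≤ x)
    (hX : 0 < X) (haA : aa^2 ≤ A) (hxX : x ≤ X)
    (htB : t ≤ A/4*(X+1/X)^2) :
    t + aa^2 * max (1 + t/(max (x*Real.sqrt t*aa) (aa^2))^2
        *(aa^2-2*(max (x*Real.sqrt t*aa) (aa^2)))) 0
      ≤ A/4*(X+1/X)^2 := by
  have hA0 : 0 ≤ A := le_trans (sq_nonneg aa) haA
  have hXX : 0 < X + 1/X := by positivity
  have hsA : aa ≤ Real.sqrt A := by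
    nlinarith [Real.sq_sqrt hA0, Real.sqrt_nonneg A]
  have hsA0 : 0 ≤ Real.sqrt A := Real.sqrt_nonneg A
  set sB := Real.sqrt A/2*(X+1/X) with hsBdef
  have hsB0 : 0 ≤ sB := by positivity
  have hB : sB ^ 2 = A / 4 * (X + 1/X)^2 := by
    rw [hsBdef, mul_pow, div_pow, Real.sq_sqrt hA0]; ring
  set u := Real.sqrt t with hudef
  have hu : u^2 = t := Real.sq_sqrt ht
  have hu0 : 0 ≤ u := Real.sqrt_nonneg t
  have ha2 : (0:ℝ) < aa^2 := by positivity
  rcases max_cases (x*u*aa) (aa^2) with ⟨hc, hle⟩ | ⟨hc, hlt⟩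
  · -- c = x*u*aa, with aa^2 ≤ x*u*aa
    rw [hc]
    have hxu : aa ≤ x*u := by
      by_contra h
      push_neg at h
      nlinarith
    have hx0 : 0 < x := by nlinarith
    have hu0' : 0 < u := by nlinarith
    have hinner : 1 + t/(x*u*aa)^2*(aa^2-2*(x*u*aa))
        = 1 + 1/x^2 - 2*u/(x*aa) := by
      rw [← hu]; field_simp; ring
    rw [hinner]
    rcases le_or_gt (1 + 1/x^2 - 2*u/(x*aa)) 0 with h0 | h0
    · rw [max_eq_right h0]
      nlinarith
    · rw [max_eq_left h0.le, ← hB]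
      have husB : u ≤ sB := by nlinarith
      have haxu : aa/x ≤ u := by
        rw [div_le_iff₀ hx0]; nlinarith
      have hxinv : x * (1/x) = 1 := by field_simp
      have hXinv : X * (1/X) = 1 := by field_simp
      -- key: aa*x + aa/x ≤ 2*sB
      have hkey : aa*x + aa/x ≤ 2*sB := by
        rcases le_total x 1 with h1 | h1
        · have h2 : aa*x ≤ aa/x := by
            rw [le_div_iff₀ hx0]
            have h3 : (0:ℝ) ≤ aa*(1 - x*x) := mul_nonneg ha.le (by nlinarith)
            nlinarith
          nlinarith
        · have hxx : x + 1/x ≤ X + 1/X := by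
            have h2 : (0:ℝ) ≤ (X - x)*(x*X - 1) := by
              apply mul_nonneg (by linarith)
              nlinarith
            nlinarith [mul_pos hx0 hX]
          have h3 : aa*(x + 1/x) ≤ Real.sqrt A*(X + 1/X) :=
            mul_le_mul hsA hxx (by positivity) hsA0
          have h4 : aa/x = aa*(1/x) := by ring
          rw [hsBdef]; rw [h4]; nlinarith
      have heq : u^2 + aa^2 * (1 + 1/x^2 - 2*u/(x*aa))
          = u^2 + aa^2 + (aa/x)^2 - 2*(aa/x)*u := by
        field_simp; ring
      rw [← hu, heq]
      have h5 : aa^2 + (aa/x)^2 ≤ 2*sB*(aa/x) := by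
        have h6 := mul_le_mul_of_nonneg_right hkey
          (show (0:ℝ) ≤ aa/x by positivity)
        have hexp : (aa*x + aa/x)*(aa/x) = aa^2 + (aa/x)^2 := by
          field_simp
        linarith [hexp ▸ h6]
      nlinarith [mul_nonneg (sub_nonneg.2 husB)
        (by linarith : (0:ℝ) ≤ sB + u - 2*(aa/x)), h5]
  · -- c = aa^2, with x*u*aa < aa^2
    rw [hc]
    have hinner : 1 + t/(aa^2)^2*(aa^2-2*aa^2) = 1 - t/aa^2 := by
      field_simp; ring
    rw [hinner]
    rcases le_total t (aa^2) with h1 | h1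
    · rw [max_eq_left (by rw [sub_nonneg, div_le_one ha2]; exact h1)]
      have heq : t + aa^2*(1 - t/aa^2) = aa^2 := by field_simp; ring
      rw [heq]
      have hX2 : (X+1/X)^2 = (X-1/X)^2 + 4 := by field_simp; ring
      rw [hX2]
      nlinarith [mul_nonneg hA0 (sq_nonneg (X - 1/X))]
    · rw [max_eq_right (by rw [sub_nonpos, le_div_iff₀ ha2, one_mul]; exact h1)]
      nlinarith

/-- Adaptive thresholding bound for the self-balancing Hilbert walk recursion:
with thresholds `c_i = max(γ_i σ_{i−1} a_i, a_i²)` and the recursion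
`σ_i² = σ_{i−1}² + a_i²(1 + (σ_{i−1}²/c_i²)(a_i² − 2c_i))₊` when `a_i > 0`
(and `σ_i² = σ_{i−1}²` when `a_i = 0`), one has
`σ_n² ≤ ((max_{i≤n} a_i²)/4)(γ* + 1/γ*)²` for `γ* = max_{i≤n} γ_i > 0`.
Here `s i` denotes `σ_i²` (so `σ_{i−1} = √(s (i−1))`). -/
theorem adaptive_thresholding_bound (n : ℕ) (hn : 1 ≤ n) (a γ : ℕ → ℝ)
    (ha : ∀ i ∈ Finset.Icc 1 n, 0 ≤ a i) (hγ : ∀ i ∈ Finset.Icc 1 n, 0 ≤ γ i)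
    (hγstar : 0 < (Finset.Icc 1 n).sup' (Finset.nonempty_Icc.mpr hn) γ)
    (c s : ℕ → ℝ) (hs0 : s 0 = 0)
    (hcdef : ∀ i ∈ Finset.Icc 1 n,
      c i = max (γ i * Real.sqrt (s (i - 1)) * a i) ((a i) ^ 2))
    (hrec : ∀ i ∈ Finset.Icc 1 n,
      (0 < a i →
        s i = s (i - 1)
          + (a i) ^ 2 * max (1 + (s (i - 1) / (c i) ^ 2) * ((a i) ^ 2 - 2 * c i)) 0) ∧
      (a i = 0 → s i = s (i - 1))) :
    s n ≤ ((Finset.Icc 1 n).sup' (Finset.nonempty_Icc.mpr hn) (fun i => (a i) ^ 2)) / 4 *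
        ((Finset.Icc 1 n).sup' (Finset.nonempty_Icc.mpr hn) γ
          + 1 / (Finset.Icc 1 n).sup' (Finset.nonempty_Icc.mpr hn) γ) ^ 2 := by
  set X := (Finset.Icc 1 n).sup' (Finset.nonempty_Icc.mpr hn) γ with hXdef
  set A := (Finset.Icc 1 n).sup' (Finset.nonempty_Icc.mpr hn) (fun i => (a i) ^ 2)
    with hAdef
  have h1mem : (1:ℕ) ∈ Finset.Icc 1 n := Finset.mem_Icc.mpr ⟨le_refl 1, hn⟩
  have hA0 : 0 ≤ A := le_trans (sq_nonneg (a 1))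
    (Finset.le_sup' (fun i => (a i) ^ 2) h1mem)
  have hB0 : 0 ≤ A/4*(X+1/X)^2 := by positivity
  have key : ∀ i, i ≤ n → s i ≤ A/4*(X+1/X)^2 ∧ 0 ≤ s i := by
    intro i
    induction i with
    | zero => intro _; rw [hs0]; exact ⟨hB0, le_refl 0⟩
    | succ k ih =>
      intro hkn
      obtain ⟨hkB, hk0⟩ := ih (Nat.le_of_succ_le hkn)
      have hmem : k + 1 ∈ Finset.Icc 1 n := Finset.mem_Icc.mpr ⟨Nat.succ_le_succ (Nat.zero_le k), hkn⟩
      have hsub : (k + 1) - 1 = k := Nat.succ_sub_one k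
      obtain ⟨hpos, hzero⟩ := hrec (k+1) hmem
      rcases (lt_or_eq_of_le (ha (k+1) hmem)).symm with h0 | h0
      · rw [hzero h0.symm, hsub]; exact ⟨hkB, hk0⟩
      · have hsk1 := hpos h0
        rw [hsub] at hsk1
        have hc := hcdef (k+1) hmem
        rw [hsub] at hc
        constructor
        · rw [hsk1, hc]
          have := step_bound A X (s k) (a (k+1)) (γ (k+1)) hk0 h0
            (hγ (k+1) hmem) hγstar
            (Finset.le_sup' (fun i => (a i) ^ 2) hmem)
            (Finset.le_sup' γ hmem) hkB
          convert this using 4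
        · rw [hsk1]
          have : 0 ≤ (a (k+1))^2 * max (1 + s k / c (k+1) ^ 2 * ((a (k+1))^2 - 2 * c (k+1))) 0 :=
            mul_nonneg (sq_nonneg _) (le_max_right _ _)
          linarith
  exact (key n (le_refl n)).1
end

section
/- Let d ≥ 1 and let k : ℝᵈ × ℝᵈ → ℝ have finite Lipschitz constant L_k := sup_{x, y ≠ z} |k(x,y) − k(x,z)|/‖y − z‖ and tail function τ̄_k(R) := sup{|k(x,y)| : ‖x − y‖ ≥ R}. Fix points x₁, …, x_n ∈ ℝᵈ and signs η₁, …, η_n ∈ {−1, 1}, and define ψ(x) := Σ_{i=1}^n η_i k(x_i, x). If 0 < r ≤ R and C ⊂ ℝᵈ is a finite set satisfying ∪_{i=1}^n B(x_i, R) ⊆ ∪_{z∈C} B(z, r), where B(x, R) denotes the open Euclidean ball of radius R centered at x, then sup_{x∈ℝᵈ} |ψ(x)| ≤ max(n · τ̄_k(R), n · L_k · r + max_{z∈C} |ψ(z)|). -/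
open MeasureTheory

/-- Deterministic covering bound for the signed kernel sum `ψ = Σᵢ ηᵢ k(xᵢ,·)`:
if `k` has Lipschitz constant (in its second argument) at most `L`, `|k(x,y)| ≤ T`
whenever `‖x − y‖ ≥ R`, and the finite set `C` is an `r`-cover of `∪ᵢ B(xᵢ, R)`
with `0 < r ≤ R`, then `sup_x |ψ(x)| ≤ max(n T, n L r + max_{z ∈ C} |ψ(z)|)`. -/
theorem signed_kernel_sum_covering_bound {d : ℕ} (hd : 1 ≤ d)
    (k : EuclideanSpace ℝ (Fin d) → EuclideanSpace ℝ (Fin d) → ℝ)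
    (L : ℝ) (hL : ∀ x y z, |k x y - k x z| ≤ L * ‖y - z‖)
    (R r : ℝ) (hr : 0 < r) (hrR : r ≤ R)
    (T : ℝ) (hT : ∀ x y : EuclideanSpace ℝ (Fin d), R ≤ ‖x - y‖ → |k x y| ≤ T)
    (n : ℕ) (hn : 1 ≤ n) (x : Fin n → EuclideanSpace ℝ (Fin d))
    (η : Fin n → ℝ) (hη : ∀ i, η i = 1 ∨ η i = -1)
    (C : Finset (EuclideanSpace ℝ (Fin d)))
    (hcover : ∀ y : EuclideanSpace ℝ (Fin d),
      (∃ i, y ∈ Metric.ball (x i) R) → ∃ z ∈ C, y ∈ Metric.ball z r) :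
    ∀ w : EuclideanSpace ℝ (Fin d),
      |∑ i, η i * k (x i) w|
        ≤ max ((n : ℝ) * T)
            ((n : ℝ) * L * r + ⨆ z ∈ (C : Set (EuclideanSpace ℝ (Fin d))), |∑ i, η i * k (x i) z|) := by

  intro w
  have hηabs : ∀ i, |η i| = 1 := by
    intro i; rcases hη i with h | h <;> simp [h]
  have hL0 : 0 ≤ L := by
    have h := hL (x ⟨0, hn⟩) 0 (EuclideanSpace.single ⟨0, hd⟩ 1)
    have hnorm : ‖(0 : EuclideanSpace ℝ (Fin d)) - EuclideanSpace.single ⟨0, hd⟩ (1:ℝ)‖ = 1 := by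
      simp [EuclideanSpace.norm_single]
    rw [hnorm, mul_one] at h
    exact le_trans (abs_nonneg _) h
  by_cases hfar : ∀ i, R ≤ ‖x i - w‖
  · refine le_max_of_le_left ?_
    calc |∑ i, η i * k (x i) w| ≤ ∑ i, |η i * k (x i) w| := Finset.abs_sum_le_sum_abs _ _
      _ ≤ ∑ _i : Fin n, T := by
          refine Finset.sum_le_sum fun i _ => ?_
          rw [abs_mul, hηabs i, one_mul]
          exact hT _ _ (hfar i)
      _ = (n : ℝ) * T := by simp [mul_comm]
  · push_neg at hfar
    obtain ⟨i, hi⟩ := hfar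
    obtain ⟨z, hzC, hz⟩ := hcover w ⟨i, by
      rw [Metric.mem_ball, dist_eq_norm, ← norm_neg]; simpa [neg_sub] using hi⟩
    rw [Metric.mem_ball, dist_eq_norm] at hz
    refine le_max_of_le_right ?_
    have h1 : |∑ j, η j * k (x j) w - ∑ j, η j * k (x j) z| ≤ (n : ℝ) * L * r := by
      rw [← Finset.sum_sub_distrib]
      calc |∑ j, (η j * k (x j) w - η j * k (x j) z)|
          ≤ ∑ j, |η j * k (x j) w - η j * k (x j) z| := Finset.abs_sum_le_sum_abs _ _
        _ ≤ ∑ _j : Fin n, L * r := by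
            refine Finset.sum_le_sum fun j _ => ?_
            rw [← mul_sub, abs_mul, hηabs j, one_mul]
            calc |k (x j) w - k (x j) z| ≤ L * ‖w - z‖ := hL _ _ _
              _ ≤ L * r := by nlinarith [hz.le]
        _ = (n : ℝ) * (L * r) := by simp
        _ = (n : ℝ) * L * r := by ring
    have h2 : |∑ j, η j * k (x j) z|
        ≤ ⨆ z ∈ (C : Set (EuclideanSpace ℝ (Fin d))), |∑ j, η j * k (x j) z| := by
      set f : EuclideanSpace ℝ (Fin d) → ℝ := fun y => |∑ j, η j * k (x j) y| with hf
      have hbdd : BddAbove (Set.range fun y => ⨆ _ : y ∈ (C : Set (EuclideanSpace ℝ (Fin d))), f y) := by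
        refine (((C.finite_toSet.image f).insert 0).bddAbove).mono ?_
        rintro _ ⟨y, rfl⟩
        simp only
        by_cases hy : y ∈ (C : Set (EuclideanSpace ℝ (Fin d)))
        · rw [ciSup_pos hy]
          
          exact Set.mem_insert_of_mem _ ⟨y, hy, rfl⟩
        · have : IsEmpty (y ∈ (C : Set (EuclideanSpace ℝ (Fin d)))) := ⟨hy⟩
          rw [Real.iSup_of_isEmpty (fun _ => f y)]
          exact Set.mem_insert _ _
      have hzC' : z ∈ (C : Set (EuclideanSpace ℝ (Fin d))) := Finset.mem_coe.mpr hzC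
      calc f z = ⨆ _ : z ∈ (C : Set (EuclideanSpace ℝ (Fin d))), f z := (ciSup_pos (f := fun _ => f z) hzC').symm
        _ ≤ ⨆ y ∈ (C : Set (EuclideanSpace ℝ (Fin d))), f y := le_ciSup hbdd z
    calc |∑ j, η j * k (x j) w|
        = |(∑ j, η j * k (x j) w - ∑ j, η j * k (x j) z) + ∑ j, η j * k (x j) z| := by
          ring_nf
      _ ≤ |∑ j, η j * k (x j) w - ∑ j, η j * k (x j) z| + |∑ j, η j * k (x j) z| := abs_add_le _ _
      _ ≤ (n : ℝ) * L * r + _ := add_le_add h1 h2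
end

section
/- For every integer d ≥ 1 and all reals β > 0 and D > 0 with β/D² ≥ 2: ∫₀^D √(log(1 + (1 + β/u²)^d)) du ≤ √d · D · (3 + √(2 log(β/D²))). -/
open intervalIntegral

lemma my_sqrt_add_le (x y : ℝ) (hx : 0 ≤ x) (hy : 0 ≤ y) :
    Real.sqrt (x + y) ≤ Real.sqrt x + Real.sqrt y := by
  have h := Real.sqrt_le_sqrt (show x + y ≤ (Real.sqrt x + Real.sqrt y) ^ 2 by
    nlinarith [Real.sq_sqrt hx, Real.sq_sqrt hy, Real.sqrt_nonneg x, Real.sqrt_nonneg y,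
      mul_nonneg (Real.sqrt_nonneg x) (Real.sqrt_nonneg y)])
  rwa [Real.sqrt_sq (by positivity)] at h

lemma my_sqrt_le (z : ℝ) (hz : 0 ≤ z) : Real.sqrt z ≤ (z + 1) / 2 := by
  have h := Real.sqrt_le_sqrt (show z ≤ ((z + 1) / 2) ^ 2 by nlinarith [sq_nonneg (z-1)])
  rwa [Real.sqrt_sq (by linarith)] at h

/-- Bound on the Dudley entropy integral: for every integer `d ≥ 1` and reals
`β, D > 0` with `β/D² ≥ 2`,
`∫₀^D √(log(1 + (1 + β/u²)^d)) du ≤ √d · D · (3 + √(2 log(β/D²)))`. -/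
theorem dudley_entropy_integral_le (d : ℕ) (hd : 1 ≤ d) (β D : ℝ) (hβ : 0 < β) (hD : 0 < D)
    (h2 : 2 ≤ β / D ^ 2) :
    (∫ u in (0 : ℝ)..D, Real.sqrt (Real.log (1 + (1 + β / u ^ 2) ^ d)))
      ≤ Real.sqrt d * D * (3 + Real.sqrt (2 * Real.log (β / D ^ 2))) := by
  have hL : (0:ℝ) ≤ Real.log (β / D ^ 2) := Real.log_nonneg (by linarith)
  set L : ℝ := Real.log (β / D ^ 2) with hLdef
  set c : ℝ := Real.sqrt L + (1 + Real.log 3) / 2 - 3 with hc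
  set g : ℝ → ℝ := fun u => Real.sqrt d * (c + 3 * D ^ ((1:ℝ)/3) * u ^ (-(1:ℝ)/3)) with hg
  have hdpos : (0:ℝ) < (d:ℝ) := by exact_mod_cast hd
  -- integrability of g on [0, D]
  have hgint : IntervalIntegrable g MeasureTheory.volume 0 D := by
    apply IntervalIntegrable.const_mul
    apply IntervalIntegrable.add intervalIntegrable_const
    exact (intervalIntegrable_rpow' (by norm_num)).const_mul _
  -- pointwise bound on Ioc 0 D
  have hpt : ∀ u ∈ Set.Ioc (0:ℝ) D,
      Real.sqrt (Real.log (1 + (1 + β / u ^ 2) ^ d)) ≤ g u := by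
    intro u hu
    obtain ⟨hu0, huD⟩ := hu
    have hu2 : (0:ℝ) < u ^ 2 := by positivity
    have hb : (0:ℝ) < β / u ^ 2 := by positivity
    have h2u : 2 ≤ β / u ^ 2 := by
      refine le_trans h2 ?_
      apply div_le_div_of_nonneg_left hβ.le hu2
      · exact pow_le_pow_left₀ hu0.le huD 2
    have h1b : (1:ℝ) ≤ 1 + β / u ^ 2 := by linarith
    -- step A: 1 + (1+β/u²)^d ≤ 2 (1+β/u²)^d
    have hA : 1 + (1 + β / u ^ 2) ^ d ≤ 2 * (1 + β / u ^ 2) ^ d := by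
      have := one_le_pow₀ (a := 1 + β / u ^ 2) h1b (n := d)
      linarith
    have hpowpos : (0:ℝ) < (1 + β / u ^ 2) ^ d := by positivity
    have hlog1 : Real.log (1 + (1 + β / u ^ 2) ^ d) ≤ (d:ℝ) * Real.log (3 * (β / u ^ 2)) := by
      calc Real.log (1 + (1 + β / u ^ 2) ^ d)
          ≤ Real.log (2 * (1 + β / u ^ 2) ^ d) :=
            Real.log_le_log (by positivity) hA
        _ = Real.log 2 + (d:ℝ) * Real.log (1 + β / u ^ 2) := by
            rw [Real.log_mul (by norm_num) (ne_of_gt hpowpos), Real.log_pow]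
        _ ≤ (d:ℝ) * (Real.log 2 + Real.log (1 + β / u ^ 2)) := by
            have h2' : (0:ℝ) ≤ Real.log 2 := Real.log_nonneg (by norm_num)
            have hd1 : (1:ℝ) ≤ (d:ℝ) := by exact_mod_cast hd
            nlinarith
        _ = (d:ℝ) * Real.log (2 * (1 + β / u ^ 2)) := by
            rw [Real.log_mul (by norm_num) (by linarith)]
        _ ≤ (d:ℝ) * Real.log (3 * (β / u ^ 2)) := by
            apply mul_le_mul_of_nonneg_left _ hdpos.le
            apply Real.log_le_log (by linarith)
            linarith
    -- decompose log(3β/u²)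
    have hsplit : Real.log (3 * (β / u ^ 2)) = L + (Real.log 3 + 2 * Real.log (D / u)) := by
      have : 3 * (β / u ^ 2) = 3 * ((β / D ^ 2) * (D / u) ^ 2) := by
        field_simp
      rw [this, Real.log_mul (by norm_num) (by positivity),
        Real.log_mul (by positivity) (by positivity), Real.log_pow]
      push_cast; ring
    have hDu1 : (1:ℝ) ≤ D / u := (one_le_div hu0).2 huD
    have hlogDu : (0:ℝ) ≤ Real.log (D / u) := Real.log_nonneg hDu1
    have hlog3 : (0:ℝ) ≤ Real.log 3 := Real.log_nonneg (by norm_num)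
    -- log(D/u) ≤ 3((D/u)^{1/3} - 1)
    have hcube : Real.log (D / u) ≤ 3 * ((D / u) ^ ((1:ℝ)/3) - 1) := by
      have hy : (0:ℝ) < (D / u) ^ ((1:ℝ)/3) := Real.rpow_pos_of_pos (by positivity) _
      have h1 : Real.log ((D / u) ^ ((1:ℝ)/3)) ≤ (D / u) ^ ((1:ℝ)/3) - 1 :=
        Real.log_le_sub_one_of_pos hy
      rw [Real.log_rpow (by positivity)] at h1
      linarith
    have hrpow : (D / u) ^ ((1:ℝ)/3) = D ^ ((1:ℝ)/3) * u ^ (-(1:ℝ)/3) := by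
      rw [Real.div_rpow hD.le hu0.le, div_eq_mul_inv, ← Real.rpow_neg hu0.le]
      norm_num
    -- assemble
    have hstep : Real.sqrt (Real.log (1 + (1 + β / u ^ 2) ^ d))
        ≤ Real.sqrt d * Real.sqrt (L + (Real.log 3 + 2 * Real.log (D / u))) := by
      rw [← Real.sqrt_mul hdpos.le]
      apply Real.sqrt_le_sqrt
      rw [← hsplit]; exact hlog1
    refine hstep.trans ?_
    rw [hg]
    apply mul_le_mul_of_nonneg_left _ (Real.sqrt_nonneg _)
    calc Real.sqrt (L + (Real.log 3 + 2 * Real.log (D / u)))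
        ≤ Real.sqrt L + Real.sqrt (Real.log 3 + 2 * Real.log (D / u)) :=
          my_sqrt_add_le _ _ hL (by linarith)
      _ ≤ Real.sqrt L + ((Real.log 3 + 2 * Real.log (D / u)) + 1) / 2 := by
          have := my_sqrt_le (Real.log 3 + 2 * Real.log (D / u)) (by linarith)
          linarith
      _ ≤ c + 3 * D ^ ((1:ℝ)/3) * u ^ (-(1:ℝ)/3) := by
          rw [hc]
          have := hcube
          rw [hrpow] at this
          linarith
  -- compare integrals
  have hmono : (∫ u in (0 : ℝ)..D, Real.sqrt (Real.log (1 + (1 + β / u ^ 2) ^ d)))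
      ≤ ∫ u in (0:ℝ)..D, g u := by
    rw [intervalIntegral.integral_of_le hD.le, intervalIntegral.integral_of_le hD.le]
    apply MeasureTheory.integral_mono_of_nonneg
    · exact Filter.Eventually.of_forall fun u => Real.sqrt_nonneg _
    · exact (hgint.1).mono_set (by simp [Set.uIoc_of_le hD.le])
    · exact (MeasureTheory.ae_restrict_iff' measurableSet_Ioc).2 (Filter.Eventually.of_forall hpt)
  refine hmono.trans ?_
  -- compute ∫ g
  have hval : (∫ u in (0:ℝ)..D, g u) = Real.sqrt d * (c * D + 3 * D ^ ((1:ℝ)/3) * (D ^ ((2:ℝ)/3) / ((2:ℝ)/3))) := by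
    rw [hg]
    rw [intervalIntegral.integral_const_mul]
    congr 1
    rw [intervalIntegral.integral_add intervalIntegrable_const
      ((intervalIntegrable_rpow' (by norm_num)).const_mul _)]
    rw [intervalIntegral.integral_const_mul, integral_rpow (Or.inl (by norm_num))]
    have h0 : (0:ℝ) ^ (-(1:ℝ)/3 + 1) = 0 := by
      rw [Real.zero_rpow]; norm_num
    rw [h0]
    norm_num
    ring_nf
  rw [hval]
  -- final arithmetic
  have hD13 : D ^ ((1:ℝ)/3) * D ^ ((2:ℝ)/3) = D := by
    rw [← Real.rpow_add hD]
    norm_num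
  have hkey : c * D + 3 * D ^ ((1:ℝ)/3) * (D ^ ((2:ℝ)/3) / ((2:ℝ)/3))
      ≤ D * (3 + Real.sqrt (2 * L)) := by
    have e1 : 3 * D ^ ((1:ℝ)/3) * (D ^ ((2:ℝ)/3) / ((2:ℝ)/3)) = (9/2) * D := by
      field_simp
      nlinarith [hD13]
    rw [e1, hc]
    have hlog3le : Real.log 3 ≤ 2 := by
      have := Real.log_le_sub_one_of_pos (show (0:ℝ) < 3 by norm_num)
      linarith
    have hsq : Real.sqrt L ≤ Real.sqrt (2 * L) := Real.sqrt_le_sqrt (by linarith)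
    nlinarith [Real.sqrt_nonneg L, Real.sqrt_nonneg (2*L)]
  calc Real.sqrt d * (c * D + 3 * D ^ ((1:ℝ)/3) * (D ^ ((2:ℝ)/3) / ((2:ℝ)/3)))
      ≤ Real.sqrt d * (D * (3 + Real.sqrt (2 * L))) :=
        mul_le_mul_of_nonneg_left hkey (Real.sqrt_nonneg _)
    _ = Real.sqrt d * D * (3 + Real.sqrt (2 * L)) := by ring
end

section
/- For all real numbers a ≥ 1 and r > 0 with r ≥ 2(a − 1): (1/2) ∫₀^∞ e^{−r cosh t} cosh(a t) dt ≤ (4/r) e^{−r/2}, where cosh t = (e^t + e^{−t})/2. -/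
open MeasureTheory Real Set Filter

private lemma cosh_le_exp_of_nonneg {x : ℝ} (hx : 0 ≤ x) : Real.cosh x ≤ Real.exp x := by
  rw [Real.cosh_eq]
  have h : Real.exp (-x) ≤ Real.exp x := Real.exp_le_exp.2 (by linarith)
  linarith

private lemma quad_le_cosh {x : ℝ} (hx : 0 ≤ x) : 1 + x ^ 2 / 2 ≤ Real.cosh x := by
  have h1 := Real.cosh_two_mul (x / 2)
  rw [show 2 * (x / 2) = x by ring] at h1
  have h2 : Real.cosh (x / 2) ^ 2 = Real.sinh (x / 2) ^ 2 + 1 := Real.cosh_sq (x / 2)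
  have h3 : x / 2 ≤ Real.sinh (x / 2) := Real.self_le_sinh_iff.2 (by linarith)
  nlinarith [h3]

private lemma integral_Ioi_x_exp {b : ℝ} (hb : 0 < b) :
    ∫ x in Set.Ioi (0 : ℝ), x * Real.exp (-b * x ^ 2) = 1 / (2 * b) := by
  have hderiv : ∀ x ∈ Set.Ici (0 : ℝ),
      HasDerivAt (fun y : ℝ => -(1 / (2 * b)) * Real.exp (-b * y ^ 2))
        (x * Real.exp (-b * x ^ 2)) x := by
    intro x _
    have h1 : HasDerivAt (fun y : ℝ => -b * y ^ 2) (-b * (2 * x)) x := by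
      simpa using (hasDerivAt_pow 2 x).const_mul (-b)
    have h2 := h1.exp.const_mul (-(1 / (2 * b)))
    refine h2.congr_deriv ?_
    field_simp
  have h1 : Tendsto (fun y : ℝ => -b * y ^ 2) atTop atBot := by
    have h := (tendsto_pow_atTop (two_ne_zero)).const_mul_atTop hb
    have h2 := tendsto_neg_atTop_atBot.comp h
    have h3 : (fun y : ℝ => -b * y ^ 2) = (Neg.neg ∘ fun x : ℝ => b * x ^ 2) := by
      funext y; simp [neg_mul]
    rwa [h3]
  have htend : Tendsto (fun y : ℝ => -(1 / (2 * b)) * Real.exp (-b * y ^ 2)) atTop (nhds 0) := by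
    have h2 := (Real.tendsto_exp_atBot.comp h1).const_mul (-(1 / (2 * b)))
    simpa using h2
  have hFTC := integral_Ioi_of_hasDerivAt_of_tendsto' hderiv
    ((integrable_mul_exp_neg_mul_sq hb).integrableOn) htend
  simpa using hFTC

/-- Modified Bessel function bound: for `a ≥ 1` and `r > 0` with `r ≥ 2(a−1)`,
`K_a(r) = (1/2) ∫₀^∞ e^{−r cosh t} cosh(a t) dt ≤ (4/r) e^{−r/2}`. -/
theorem bessel_K_le (a r : ℝ) (ha : 1 ≤ a) (hr : 0 < r) (hra : 2 * (a - 1) ≤ r) :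
    (1 / 2) * ∫ t in Set.Ioi (0 : ℝ), Real.exp (-r * Real.cosh t) * Real.cosh (a * t)
      ≤ (4 / r) * Real.exp (-r / 2) := by
  rcases le_or_gt r 1 with hr1 | hr1
  · -- small `r`: substitution `u = exp (t/2)`
    have hc0 : 0 < r / 2 := half_pos hr
    set c : ℝ := r / 2 with hcdef
    have hchalf : c ≤ 1 / 2 := by rw [hcdef]; linarith
    have hac : a - 1 ≤ c := by rw [hcdef]; linarith
    set g : ℝ → ℝ := fun u => 2 / u *
      (Real.exp (-c * (u ^ 2 + (u ^ 2)⁻¹)) * Real.cosh (2 * a * Real.log u)) with hgdef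
    set D : ℝ → ℝ := fun u =>
      Real.exp (-c) * ((2 * (u - 1) + 2) * Real.exp (-c * (u - 1) ^ 2)) with hDdef
    -- substitution
    have himg : (fun t : ℝ => Real.exp (t / 2)) '' Set.Ioi 0 = Set.Ioi 1 := by
      ext u
      simp only [Set.mem_image, Set.mem_Ioi]
      constructor
      · rintro ⟨t, ht, rfl⟩
        have h0 : (0 : ℝ) < t / 2 := by linarith
        simpa using Real.one_lt_exp_iff.2 h0
      · intro hu
        have hu0 : (0 : ℝ) < u := lt_trans one_pos hu
        refine ⟨2 * Real.log u, by simpa using Real.log_pos hu, ?_⟩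
        rw [show 2 * Real.log u / 2 = Real.log u by ring, Real.exp_log hu0]
    have hfderiv : ∀ t ∈ Set.Ioi (0 : ℝ),
        HasDerivWithinAt (fun t : ℝ => Real.exp (t / 2)) (Real.exp (t / 2) / 2) (Set.Ioi 0) t := by
      intro t _
      have h : HasDerivAt (fun t : ℝ => Real.exp (t / 2)) (Real.exp (t / 2) * (1 / 2)) t :=
        ((hasDerivAt_id t).div_const 2).exp
      have h2 : Real.exp (t / 2) * (1 / 2) = Real.exp (t / 2) / 2 := by ring
      exact (h2 ▸ h).hasDerivWithinAt
    have hinj : Set.InjOn (fun t : ℝ => Real.exp (t / 2)) (Set.Ioi 0) := by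
      intro x _ y _ h
      have h2 := Real.exp_injective h
      linarith
    have hkey : ∀ t ∈ Set.Ioi (0 : ℝ),
        |Real.exp (t / 2) / 2| • g (Real.exp (t / 2))
          = Real.exp (-r * Real.cosh t) * Real.cosh (a * t) := by
      intro t _
      have hexp : Real.exp (t / 2) ^ 2 = Real.exp t := by
        rw [sq, ← Real.exp_add]; norm_num
      have habs : |Real.exp (t / 2) / 2| = Real.exp (t / 2) / 2 := abs_of_pos (by positivity)
      rw [smul_eq_mul, habs]
      simp only [hgdef, hexp, Real.log_exp]
      rw [show (2 : ℝ) * a * (t / 2) = a * t by ring,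
        show -c * (Real.exp t + (Real.exp t)⁻¹) = -r * Real.cosh t by
          rw [← Real.exp_neg, Real.cosh_eq, hcdef]; ring]
      field_simp [Real.exp_ne_zero]
    have hsub : (∫ t in Set.Ioi (0 : ℝ), Real.exp (-r * Real.cosh t) * Real.cosh (a * t))
        = ∫ u in Set.Ioi (1 : ℝ), g u := by
      rw [← himg, integral_image_eq_integral_abs_deriv_smul measurableSet_Ioi hfderiv hinj g]
      exact (setIntegral_congr_fun measurableSet_Ioi hkey).symm
    -- integrability of the dominating function
    have hbase : Integrable (fun v : ℝ => (2 * v + 2) * Real.exp (-c * v ^ 2)) := by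
      have h1 := (integrable_mul_exp_neg_mul_sq hc0).const_mul 2
      have h2 := (integrable_exp_neg_mul_sq hc0).const_mul 2
      refine (h1.add h2).congr (Filter.Eventually.of_forall fun v => ?_)
      simp only [Pi.add_apply]
      ring
    have hshift : Integrable (fun u : ℝ => (2 * (u - 1) + 2) * Real.exp (-c * (u - 1) ^ 2)) :=
      hbase.comp_sub_right 1
    -- pointwise bound `g ≤ D` on `Ioi 1`
    have hgD : ∀ u ∈ Set.Ioi (1 : ℝ), g u ≤ D u := by
      intro u hu
      have hu1 : (1 : ℝ) < u := hu
      have hu0 : (0 : ℝ) < u := by linarith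
      have hlog0 : 0 ≤ Real.log u := (Real.log_pos hu1).le
      have hlogle : Real.log u ≤ u - 1 := Real.log_le_sub_one_of_pos hu0
      have hinv : (0 : ℝ) ≤ (u ^ 2)⁻¹ := by positivity
      have hstep1 : Real.cosh (2 * a * Real.log u) ≤ Real.exp (2 * a * Real.log u) :=
        cosh_le_exp_of_nonneg (mul_nonneg (by linarith) hlog0)
      have hE1pos := (Real.exp_pos (-c * (u ^ 2 + (u ^ 2)⁻¹))).le
      calc g u = 2 * Real.exp (-Real.log u) *
            (Real.exp (-c * (u ^ 2 + (u ^ 2)⁻¹)) * Real.cosh (2 * a * Real.log u)) := by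
            simp only [hgdef]
            rw [Real.exp_neg, Real.exp_log hu0]
            ring
        _ ≤ 2 * Real.exp (-Real.log u) *
            (Real.exp (-c * (u ^ 2 + (u ^ 2)⁻¹)) * Real.exp (2 * a * Real.log u)) := by
            have h := mul_le_mul_of_nonneg_left hstep1 hE1pos
            exact mul_le_mul_of_nonneg_left h (by positivity)
        _ = 2 * Real.exp (-Real.log u + (-c * (u ^ 2 + (u ^ 2)⁻¹) + 2 * a * Real.log u)) := by
            rw [Real.exp_add, Real.exp_add]
            ring
        _ ≤ 2 * Real.exp (Real.log u + (-c + -(c * (u - 1) ^ 2))) := by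
            have h1a : (2 * a - 2) * Real.log u ≤ 2 * c * Real.log u :=
              mul_le_mul_of_nonneg_right (by linarith) hlog0
            have h1b : 2 * c * Real.log u ≤ 2 * c * (u - 1) :=
              mul_le_mul_of_nonneg_left hlogle (by linarith)
            have h2 : 0 ≤ c * (u ^ 2)⁻¹ := mul_nonneg hc0.le hinv
            have h3 : -Real.log u + (-c * (u ^ 2 + (u ^ 2)⁻¹) + 2 * a * Real.log u)
                ≤ Real.log u + (-c + -(c * (u - 1) ^ 2)) := by nlinarith
            exact mul_le_mul_of_nonneg_left (Real.exp_le_exp.2 h3) (by norm_num)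
        _ = D u := by
            simp only [hDdef]
            rw [Real.exp_add, Real.exp_add, Real.exp_log hu0]
            ring
    -- monotonicity of the integral
    have hmono : (∫ u in Set.Ioi (1 : ℝ), g u) ≤ ∫ u in Set.Ioi (1 : ℝ), D u := by
      refine integral_mono_of_nonneg ?_ ((hshift.const_mul _).integrableOn) ?_
      · filter_upwards [ae_restrict_mem measurableSet_Ioi] with u hu
        have hu0 : (0 : ℝ) < u := lt_trans one_pos hu
        simp only [hgdef]
        have h1 : (0 : ℝ) ≤ 2 / u := div_nonneg (by norm_num) hu0.le
        exact mul_nonneg h1 (mul_nonneg (Real.exp_pos _).le (Real.cosh_pos _).le)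
      · filter_upwards [ae_restrict_mem measurableSet_Ioi] with u hu
        exact hgD u hu
    -- value of the dominating integral
    have himg2 : (fun v : ℝ => v + 1) '' Set.Ioi 0 = Set.Ioi 1 := by
      ext u
      simp only [Set.mem_image, Set.mem_Ioi]
      constructor
      · rintro ⟨v, hv, rfl⟩; linarith
      · intro hu; exact ⟨u - 1, by linarith, by ring⟩
    have hIoi0 : (∫ v in Set.Ioi (0 : ℝ), (2 * v + 2) * Real.exp (-c * v ^ 2))
        = 1 / c + Real.sqrt (Real.pi / c) := by
      have heq : Set.EqOn (fun v : ℝ => (2 * v + 2) * Real.exp (-c * v ^ 2))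
          (fun v : ℝ => 2 * (v * Real.exp (-c * v ^ 2)) + 2 * Real.exp (-c * v ^ 2))
          (Set.Ioi 0) := fun v _ => by ring
      rw [setIntegral_congr_fun measurableSet_Ioi heq,
        integral_add (((integrable_mul_exp_neg_mul_sq hc0).const_mul 2).integrableOn)
          (((integrable_exp_neg_mul_sq hc0).const_mul 2).integrableOn),
        integral_const_mul, integral_const_mul, integral_Ioi_x_exp hc0, integral_gaussian_Ioi]
      field_simp
    have hDval : (∫ u in Set.Ioi (1 : ℝ), D u)
        = Real.exp (-c) * (1 / c + Real.sqrt (Real.pi / c)) := by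
      have hval2 : (∫ u in Set.Ioi (1 : ℝ), (2 * (u - 1) + 2) * Real.exp (-c * (u - 1) ^ 2))
          = 1 / c + Real.sqrt (Real.pi / c) := by
        have hderiv2 : ∀ v ∈ Set.Ioi (0 : ℝ),
            HasDerivWithinAt (fun v : ℝ => v + 1) 1 (Set.Ioi 0) v := fun v _ =>
          ((hasDerivAt_id v).add_const 1).hasDerivWithinAt
        have hinj2 : Set.InjOn (fun v : ℝ => v + 1) (Set.Ioi 0) := fun x _ y _ h => by
          simpa using h
        rw [← himg2, integral_image_eq_integral_abs_deriv_smul measurableSet_Ioi hderiv2 hinj2 _]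
        simp only [smul_eq_mul, abs_one, one_mul, add_sub_cancel_right]
        exact hIoi0
      simp only [hDdef]
      rw [integral_const_mul, hval2]
    -- conclude
    have hsqrt : Real.sqrt (Real.pi / c) ≤ 3 / c := by
      rw [show (3 : ℝ) / c = Real.sqrt ((3 / c) ^ 2) by rw [Real.sqrt_sq (by positivity)]]
      apply Real.sqrt_le_sqrt
      rw [div_pow, div_le_div_iff₀ hc0 (by positivity)]
      nlinarith [Real.pi_le_four, hc0, hchalf]
    have hrhs : (4 / r) * Real.exp (-r / 2) = (2 / c) * Real.exp (-c) := by
      rw [hcdef]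
      rw [show -r / 2 = -(r / 2) by ring]
      congr 1
      field_simp
      norm_num
    rw [hsub, hrhs]
    have hfin : (∫ u in Set.Ioi (1 : ℝ), g u) ≤ Real.exp (-c) * (4 / c) := by
      refine hmono.trans ?_
      rw [hDval]
      have h4 : (1 : ℝ) / c + 3 / c = 4 / c := by ring
      exact mul_le_mul_of_nonneg_left (by linarith [hsqrt, h4]) (Real.exp_pos _).le
    calc (1 / 2 : ℝ) * ∫ u in Set.Ioi (1 : ℝ), g u
        ≤ (1 / 2) * (Real.exp (-c) * (4 / c)) :=
          mul_le_mul_of_nonneg_left hfin (by norm_num)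
      _ = (2 / c) * Real.exp (-c) := by ring
  · -- large `r`: Gaussian bound
    have hb0 : 0 < r / 2 := half_pos hr
    set E : ℝ := Real.exp (a ^ 2 / (2 * r) - r) with hEdef
    have hdomint : Integrable (fun t : ℝ => E * Real.exp (-(r / 2) * (t - a / r) ^ 2)) :=
      ((integrable_exp_neg_mul_sq hb0).comp_sub_right (a / r)).const_mul E
    have hpt : ∀ t ∈ Set.Ioi (0 : ℝ),
        Real.exp (-r * Real.cosh t) * Real.cosh (a * t)
          ≤ E * Real.exp (-(r / 2) * (t - a / r) ^ 2) := by
      intro t ht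
      have ht0 : (0 : ℝ) ≤ t := le_of_lt ht
      have h1 : Real.cosh (a * t) ≤ Real.exp (a * t) :=
        cosh_le_exp_of_nonneg (mul_nonneg (by linarith) ht0)
      have h2 : 1 + t ^ 2 / 2 ≤ Real.cosh t := quad_le_cosh ht0
      have h3 : Real.exp (-r * Real.cosh t) * Real.cosh (a * t)
          ≤ Real.exp (-r * Real.cosh t + a * t) := by
        rw [Real.exp_add]
        exact mul_le_mul_of_nonneg_left h1 (Real.exp_pos _).le
      refine h3.trans ?_
      rw [hEdef, ← Real.exp_add]
      apply Real.exp_le_exp.2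
      have hexpand : a ^ 2 / (2 * r) - r + -(r / 2) * (t - a / r) ^ 2
          = a * t - r - r * t ^ 2 / 2 := by
        field_simp
        ring
      rw [hexpand]
      nlinarith [mul_le_mul_of_nonneg_left h2 hr.le]
    have hstep1 : (∫ t in Set.Ioi (0 : ℝ), Real.exp (-r * Real.cosh t) * Real.cosh (a * t))
        ≤ ∫ t in Set.Ioi (0 : ℝ), E * Real.exp (-(r / 2) * (t - a / r) ^ 2) := by
      refine integral_mono_of_nonneg ?_ hdomint.integrableOn ?_
      · exact Filter.Eventually.of_forall fun t =>
          mul_nonneg (Real.exp_pos _).le (Real.cosh_pos _).le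
      · filter_upwards [ae_restrict_mem measurableSet_Ioi] with t ht
        exact hpt t ht
    have hstep2 : (∫ t in Set.Ioi (0 : ℝ), E * Real.exp (-(r / 2) * (t - a / r) ^ 2))
        ≤ ∫ t : ℝ, E * Real.exp (-(r / 2) * (t - a / r) ^ 2) :=
      setIntegral_le_integral hdomint (Filter.Eventually.of_forall fun t => by positivity)
    have hval : (∫ t : ℝ, E * Real.exp (-(r / 2) * (t - a / r) ^ 2))
        = E * Real.sqrt (Real.pi / (r / 2)) := by
      rw [integral_const_mul]
      congr 1
      rw [integral_sub_right_eq_self (fun t : ℝ => Real.exp (-(r / 2) * t ^ 2)) (a / r)]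
      exact integral_gaussian (r / 2)
    -- numerics
    have hEle : E ≤ Real.exp (1 - 7 * r / 8) := by
      rw [hEdef]
      apply Real.exp_le_exp.2
      have h1 : a ^ 2 ≤ (r / 2 + 1) ^ 2 := by nlinarith
      have h2 : a ^ 2 / (2 * r) ≤ r / 8 + 1 / 2 + 1 / (2 * r) := by
        rw [div_le_iff₀ (by positivity),
          show (r / 8 + 1 / 2 + 1 / (2 * r)) * (2 * r) = r ^ 2 / 4 + r + 1 + (r / r - 1) by ring,
          div_self hr.ne']
        nlinarith [h1]
      have h3 : 1 / (2 * r) ≤ 1 / 2 := by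
        rw [div_le_div_iff₀ (by positivity) (by norm_num)]
        linarith
      linarith
    have hQ : Real.sqrt (Real.pi / (r / 2)) ≤ 8 / r * Real.exp (3 * r / 8 - 1) := by
      have hq0 : (0 : ℝ) ≤ 8 / r * Real.exp (3 * r / 8 - 1) := by positivity
      rw [show 8 / r * Real.exp (3 * r / 8 - 1)
          = Real.sqrt ((8 / r * Real.exp (3 * r / 8 - 1)) ^ 2) from (Real.sqrt_sq hq0).symm]
      apply Real.sqrt_le_sqrt
      have hexp2 : Real.exp (3 * r / 8 - 1) ^ 2 = Real.exp (3 * r / 4 - 2) := by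
        rw [sq, ← Real.exp_add]
        ring_nf
      rw [mul_pow, hexp2]
      have hkey : 2 * Real.pi * r ≤ 64 * Real.exp (3 * r / 4 - 2) := by
        have h1 : 3 * r / 4 ≤ Real.exp (3 * r / 4 - 1) := by
          have := Real.add_one_le_exp (3 * r / 4 - 1); linarith
        have h2 : Real.exp (3 * r / 4 - 1) = Real.exp (3 * r / 4 - 2) * Real.exp 1 := by
          rw [← Real.exp_add]; ring_nf
        have h3 : 3 * r / 4 ≤ Real.exp (3 * r / 4 - 2) * Real.exp 1 := by rw [← h2]; exact h1
        have hepos := (Real.exp_pos (3 * r / 4 - 2)).le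
        have he1 : Real.exp 1 < 2.7182818286 := Real.exp_one_lt_d9
        nlinarith [Real.pi_le_four, Real.pi_pos, hepos, Real.exp_pos 1]
      rw [div_le_iff₀ hb0, show (8 / r) ^ 2 * Real.exp (3 * r / 4 - 2) * (r / 2)
          = 32 * Real.exp (3 * r / 4 - 2) * (r / r) / r by ring, div_self hr.ne', mul_one,
        le_div_iff₀ hr]
      linarith [hkey]
    have hES : E * Real.sqrt (Real.pi / (r / 2))
        ≤ Real.exp (1 - 7 * r / 8) * (8 / r * Real.exp (3 * r / 8 - 1)) :=
      mul_le_mul hEle hQ (Real.sqrt_nonneg _) (Real.exp_pos _).le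
    have hfin : Real.exp (1 - 7 * r / 8) * (8 / r * Real.exp (3 * r / 8 - 1))
        = 8 / r * Real.exp (-r / 2) := by
      have h : Real.exp (1 - 7 * r / 8) * Real.exp (3 * r / 8 - 1) = Real.exp (-r / 2) := by
        rw [← Real.exp_add]; ring_nf
      calc Real.exp (1 - 7 * r / 8) * (8 / r * Real.exp (3 * r / 8 - 1))
          = 8 / r * (Real.exp (1 - 7 * r / 8) * Real.exp (3 * r / 8 - 1)) := by ring
        _ = 8 / r * Real.exp (-r / 2) := by rw [h]
    calc (1 / 2 : ℝ) * ∫ t in Set.Ioi (0 : ℝ), Real.exp (-r * Real.cosh t) * Real.cosh (a * t)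
        ≤ (1 / 2) * (E * Real.sqrt (Real.pi / (r / 2))) :=
          mul_le_mul_of_nonneg_left (hstep1.trans (hstep2.trans_eq hval)) (by norm_num)
      _ ≤ (1 / 2) * (8 / r * Real.exp (-r / 2)) := by
          refine mul_le_mul_of_nonneg_left ?_ (by norm_num)
          exact hES.trans_eq hfin
      _ = (4 / r) * Real.exp (-r / 2) := by ring
end

section
/- For every integer m ≥ 1 and every real δ ∈ (0, 1]: Σ_{j=1}^m 4^j · log(4m/(2^j δ)) ≤ (4/3) · 4^m · log(6m/(2^m δ)). -/
lemma sumA (m : ℕ) : ∑ j ∈ Finset.Icc 1 m, (4:ℝ)^j = ((4:ℝ)^(m+1) - 4)/3 := by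
  induction m with
  | zero => simp
  | succ n ih =>
    rw [Finset.sum_Icc_succ_top (by omega), ih]
    ring

lemma sumB (m : ℕ) : ∑ j ∈ Finset.Icc 1 m, (j:ℝ)*(4:ℝ)^j
    = (4 + (3*(m:ℝ)-1)*4^(m+1))/9 := by
  induction m with
  | zero => norm_num
  | succ n ih =>
    rw [Finset.sum_Icc_succ_top (by omega), ih]
    push_cast
    ring

/-- Finite-sum inequality from the repeated kernel halving analysis:
for every integer `m ≥ 1` and real `δ ∈ (0,1]`,
`Σ_{j=1}^m 4^j log(4m/(2^j δ)) ≤ (4/3) 4^m log(6m/(2^m δ))`. -/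
theorem sum_four_pow_log_le (m : ℕ) (hm : 1 ≤ m) (δ : ℝ) (hδ0 : 0 < δ) (hδ1 : δ ≤ 1) :
    ∑ j ∈ Finset.Icc 1 m, (4 : ℝ) ^ j * Real.log (4 * (m : ℝ) / ((2 : ℝ) ^ j * δ))
      ≤ (4 / 3) * (4 : ℝ) ^ m * Real.log (6 * (m : ℝ) / ((2 : ℝ) ^ m * δ)) := by
  have hm1 : (1:ℝ) ≤ (m:ℝ) := by exact_mod_cast hm
  have hmne : (m:ℝ) ≠ 0 := by linarith
  have hδne : δ ≠ 0 := ne_of_gt hδ0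
  have hlog : ∀ j : ℕ, Real.log (4 * (m:ℝ) / ((2:ℝ)^j * δ))
      = Real.log 4 + Real.log m - (j:ℝ) * Real.log 2 - Real.log δ := by
    intro j
    rw [Real.log_div (by positivity) (by positivity),
        Real.log_mul (by norm_num) hmne,
        Real.log_mul (by positivity) hδne, Real.log_pow]
    ring
  have hkey : ∀ j ∈ Finset.Icc 1 m,
      (4:ℝ)^j * Real.log (4 * (m:ℝ) / ((2:ℝ)^j * δ))
      = (4:ℝ)^j * (Real.log 4 + Real.log m - Real.log δ)
        - ((j:ℝ)*(4:ℝ)^j) * Real.log 2 := by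
    intro j _
    rw [hlog j]; ring
  rw [Finset.sum_congr rfl hkey, Finset.sum_sub_distrib, ← Finset.sum_mul,
      ← Finset.sum_mul, sumA, sumB]
  have hlogR : Real.log (6 * (m:ℝ) / ((2:ℝ)^m * δ))
      = Real.log 6 + Real.log m - (m:ℝ) * Real.log 2 - Real.log δ := by
    rw [Real.log_div (by positivity) (by positivity),
        Real.log_mul (by norm_num) hmne,
        Real.log_mul (by positivity) hδne, Real.log_pow]
    ring
  rw [hlogR]
  have hlog4 : Real.log 4 = 2 * Real.log 2 := by
    rw [show (4:ℝ) = 2^2 by norm_num, Real.log_pow]; push_cast; ring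
  have hlog6 : Real.log 6 = Real.log 2 + Real.log 3 := by
    rw [show (6:ℝ) = 2*3 by norm_num, Real.log_mul (by norm_num) (by norm_num)]
  rw [hlog4, hlog6]
  have hL2 : 0 < Real.log 2 := Real.log_pos (by norm_num)
  have hL3 : 0 < Real.log 3 := Real.log_pos (by norm_num)
  have hlm : 0 ≤ Real.log m := Real.log_nonneg hm1
  have hld : Real.log δ ≤ 0 := Real.log_nonpos (le_of_lt hδ0) hδ1
  have h43 : 4 * Real.log 2 ≤ 3 * Real.log 3 := by
    have := Real.log_le_log (by norm_num : (0:ℝ) < 16) (by norm_num : (16:ℝ) ≤ 27)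
    rw [show (16:ℝ) = 2^4 by norm_num, show (27:ℝ) = 3^3 by norm_num,
        Real.log_pow, Real.log_pow] at this
    push_cast at this; linarith
  have hP : (4:ℝ) ≤ 4^m := by
    calc (4:ℝ) = 4^1 := by norm_num
    _ ≤ 4^m := pow_le_pow_right₀ (by norm_num) hm
  rw [pow_succ]
  nlinarith [mul_le_mul_of_nonneg_left h43 (by positivity : (0:ℝ) ≤ (4:ℝ)^m),
    mul_nonneg (by positivity : (0:ℝ) ≤ (4:ℝ)^m) (sub_nonneg.2 (hld.trans hlm))]
end
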